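/- arXiv:1607.05825 — 9 statements merged into one kernel-verified Lean document; each statement's English description precedes it below -/
import Mathlib

section
/- The Thue-Morse word is overlap-free: if a, b, n are positive integers with a < b ≤ a + n, then the factor t_a t_{a+1} ... t_{a+n} is not equal to the factor t_b t_{b+1} ... t_{b+n}. -/
open Filter

/-- The Thue-Morse word, indexed from 1: `tm i` is the parity of the number of
1's in the binary expansion of `i - 1`. -/
def tm (i : ℕ) : ℕ := (Nat.digits 2 (i - 1)).sum % 2

/-- The factor `t_a t_{a+1} ⋯ t_b` of the Thue-Morse word. -/
def seg (a b : ℕ) : List ℕ := (List.range (b + 1 - a)).map (fun j => tm (a + j))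

/-- The `i`-th block of length `m` of the Thue-Morse word (blocks indexed from 0):
`t_{im+1} ⋯ t_{(i+1)m}`. -/
def block (m i : ℕ) : List ℕ := seg (i * m + 1) ((i + 1) * m)

/-- The prefix of the Thue-Morse word of length `k * m` is a `k`-anti-power:
its `k` consecutive blocks of length `m` are pairwise distinct. -/
def IsAntiPowerPrefix (m k : ℕ) : Prop :=
  ∀ i j, i < k → j < k → i ≠ j → block m i ≠ block m j

/-- `w` is a factor (contiguous substring) of the Thue-Morse word. -/
def IsFactor (w : List ℕ) : Prop :=
  ∃ a : ℕ, w = (List.range w.length).map (fun j => tm (a + 1 + j))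

/-- `δ(m) = ⌈log₂ (m/3)⌉` (a nonnegative integer for `m ≥ 2`). -/
noncomputable def delta (m : ℕ) : ℕ := (⌈Real.logb 2 ((m : ℝ) / 3)⌉).toNat

/-- `⌈log₂ m⌉`. -/
noncomputable def ell (m : ℕ) : ℕ := (⌈Real.logb 2 (m : ℝ)⌉).toNat

/-- `K(m)`: the smallest `k` such that the prefix of the Thue-Morse word of
length `k * m` is not a `k`-anti-power. -/
noncomputable def Kap (m : ℕ) : ℕ := sInf {k | ¬ IsAntiPowerPrefix m k}

/-- `γ(k)`: the smallest odd positive integer `m` such that the prefix of the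
Thue-Morse word of length `k * m` is a `k`-anti-power. -/
noncomputable def gam (k : ℕ) : ℕ := sInf {m | Odd m ∧ IsAntiPowerPrefix m k}

/-- `Γ(k)`: the largest odd positive integer `m` such that the prefix of the
Thue-Morse word of length `k * m` is not a `k`-anti-power. -/
noncomputable def Gam (k : ℕ) : ℕ := sSup {m | Odd m ∧ ¬ IsAntiPowerPrefix m k}

/-- The Thue-Morse morphism `μ` (0 ↦ 01, 1 ↦ 10) on words. -/
def mu (w : List ℕ) : List ℕ := w.flatMap (fun a => if a = 0 then [0, 1] else [1, 0])

def f (n : ℕ) : ZMod 2 := ((Nat.digits 2 n).sum : ZMod 2)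

lemma f_two_mul (n : ℕ) : f (2 * n) = f n := by
  rcases Nat.eq_zero_or_pos n with h | h
  · simp [h]
  · unfold f
    rw [Nat.digits_def' (by norm_num : 1 < 2) (by omega)]
    simp [Nat.mul_div_cancel_left, Nat.mul_mod_right]

lemma f_odd (n : ℕ) : f (2 * n + 1) = f n + 1 := by
  unfold f
  rw [Nat.digits_def' (by norm_num : 1 < 2) (by omega)]
  have h1 : (2 * n + 1) % 2 = 1 := by omega
  have h2 : (2 * n + 1) / 2 = n := by omega
  rw [h1, h2, List.sum_cons, Nat.cast_add, Nat.cast_one]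
  ring

lemma f_ne (u : ℕ) : f (2 * u) ≠ f (2 * u + 1) := by
  rw [f_odd, f_two_mul]
  intro h
  exact one_ne_zero (left_eq_add.mp h)

lemma two_eq_zero : (1 : ZMod 2) + 1 = 0 := by decide

lemma f_eq_trans {x y x' y' : ℕ} (h : f x = f y) (hx : x = x') (hy : y = y') :
    f x' = f y' := by subst hx; subst hy; exact h

lemma no_period : ∀ p : ℕ, 1 ≤ p → ∀ i : ℕ,
    (∀ j ≤ p, f (i + j) = f (i + j + p)) → False := by
  intro p
  induction p using Nat.strong_induction_on with
  | _ p IH =>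
  intro hp i H
  rcases Nat.lt_or_ge p 2 with hp1 | hp2
  · -- p = 1
    have hpe : p = 1 := by omega
    subst hpe
    rcases Nat.even_or_odd i with ⟨m, hm⟩ | ⟨m, hm⟩
    · exact f_ne m (f_eq_trans (H 0 (by omega)) (by omega) (by omega))
    · exact f_ne (m + 1) (f_eq_trans (H 1 (by omega)) (by omega) (by omega))
  rcases Nat.even_or_odd p with ⟨q, hq⟩ | ⟨q, hq⟩
  · -- p = 2q even, descend
    have hq1 : 1 ≤ q := by omega
    refine IH q (by omega) hq1 (i / 2) ?_
    intro j hj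
    have h := H (2 * j) (by omega)
    rcases Nat.even_or_odd i with ⟨m, hm⟩ | ⟨m, hm⟩
    · have h' : f (2 * (m + j)) = f (2 * (m + j + q)) :=
        f_eq_trans h (by omega) (by omega)
      rw [f_two_mul, f_two_mul] at h'
      exact f_eq_trans h' (by omega) (by omega)
    · have h' : f (2 * (m + j) + 1) = f (2 * (m + j + q) + 1) :=
        f_eq_trans h (by omega) (by omega)
      rw [f_odd, f_odd] at h'
      exact f_eq_trans (add_right_cancel h') (by omega) (by omega)
  · -- p = 2q+1 odd, q ≥ 1
    have hq1 : 1 ≤ q := by omega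
    have A : ∀ m, i ≤ 2 * m → 2 * m ≤ i + p → f m = f (m + q) + 1 := by
      intro m h1 h2
      have h' : f (2 * m) = f (2 * (m + q) + 1) :=
        f_eq_trans (H (2 * m - i) (by omega)) (by omega) (by omega)
      rw [f_two_mul, f_odd] at h'
      exact h'
    have B : ∀ m, i ≤ 2 * m + 1 → 2 * m + 1 ≤ i + p → f m + 1 = f (m + q + 1) := by
      intro m h1 h2
      have h' : f (2 * m + 1) = f (2 * (m + q + 1)) :=
        f_eq_trans (H (2 * m + 1 - i) (by omega)) (by omega) (by omega)
      rw [f_odd, f_two_mul] at h'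
      exact h'
    rcases Nat.even_or_odd i with ⟨m0, hm0⟩ | ⟨m0, hm0⟩
    · -- i = 2*m0 : f(m+q) = f(m+q+1) for m ∈ [m0, m0+q]
      have C : ∀ m, m0 ≤ m → m ≤ m0 + q → f (m + q) = f (m + q + 1) := by
        intro m h1 h2
        have a1 := A m (by omega) (by omega)
        have b1 := B m (by omega) (by omega)
        have h3 : f (m + q) + 1 + 1 = f (m + q + 1) := by rw [← a1]; exact b1
        rw [add_assoc, two_eq_zero, add_zero] at h3
        exact h3
      rcases Nat.even_or_odd (m0 + q) with ⟨u, hu⟩ | ⟨u, hu⟩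
      · exact f_ne u (f_eq_trans (C m0 le_rfl (by omega)) (by omega) (by omega))
      · exact f_ne (u + 1)
          (f_eq_trans (C (m0 + 1) (by omega) (by omega)) (by omega) (by omega))
    · -- i = 2*m0+1 : f m = f (m+1) for m ∈ [m0, m0+q]
      have C : ∀ m, m0 ≤ m → m ≤ m0 + q → f m = f (m + 1) := by
        intro m h1 h2
        have b1 := B m (by omega) (by omega)
        have a1 := A (m + 1) (by omega) (by omega)
        rw [show m + 1 + q = m + q + 1 by omega, ← b1] at a1
        rw [add_assoc, two_eq_zero, add_zero] at a1
        exact a1.symm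
      rcases Nat.even_or_odd m0 with ⟨u, hu⟩ | ⟨u, hu⟩
      · exact f_ne u (f_eq_trans (C m0 le_rfl (by omega)) (by omega) (by omega))
      · exact f_ne (u + 1)
          (f_eq_trans (C (m0 + 1) (by omega) (by omega)) (by omega) (by omega))

theorem stmt0 (a b n : ℕ) (ha : 0 < a) (hn : 0 < n) (hab : a < b) (hba : b ≤ a + n) :
    seg a (a + n) ≠ seg b (b + n) := by
  intro heq
  unfold seg at heq
  rw [show a + n + 1 - a = n + 1 by omega, show b + n + 1 - b = n + 1 by omega] at heq
  have hpt : ∀ j ∈ List.range (n + 1), tm (a + j) = tm (b + j) :=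
    List.map_eq_map_iff.mp heq
  refine no_period (b - a) (by omega) (a - 1) ?_
  intro j hj
  have h := hpt j (List.mem_range.mpr (by omega))
  have h2 : f (a + j - 1) = f (b + j - 1) := by
    unfold f
    rw [ZMod.natCast_eq_natCast_iff]
    exact h
  exact f_eq_trans h2 (by omega) (by omega)
end

section
/- If y and v are finite words such that yvy is a factor of the Thue-Morse word and |y| = m ≥ 2, then 2^{⌈log₂(m/3)⌉} divides |yv|. -/
open Filter

namespace TMAux

def s (n : ℕ) : ℕ := (Nat.digits 2 n).sum % 2

lemma s_lt (n : ℕ) : s n < 2 := Nat.mod_lt _ (by norm_num)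

lemma s_two_mul (n : ℕ) : s (2 * n) = s n := by
  rcases Nat.eq_zero_or_pos n with rfl | h
  · simp [s]
  · unfold s
    rw [Nat.digits_def' (by norm_num : 1 < 2) (by omega)]
    have e1 : (2 * n) % 2 = 0 := by omega
    have e2 : (2 * n) / 2 = n := by omega
    simp [e1, e2]

lemma s_two_mul_add_one (n : ℕ) : s (2 * n + 1) = (s n + 1) % 2 := by
  unfold s
  rw [Nat.digits_def' (by norm_num : 1 < 2) (by omega)]
  have e1 : (2 * n + 1) % 2 = 1 := by omega
  have e2 : (2 * n + 1) / 2 = n := by omega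
  rw [e1, e2]
  simp [List.sum_cons]
  omega

lemma no_ccc (n : ℕ) : s n ≠ s (n + 1) ∨ s (n + 1) ≠ s (n + 2) := by
  rcases Nat.even_or_odd n with ⟨j, hj⟩ | ⟨j, hj⟩
  · left
    have h1 : s n = s j := by rw [hj, ← two_mul, s_two_mul]
    have h2 : s (n + 1) = (s j + 1) % 2 := by
      rw [show n + 1 = 2 * j + 1 by omega, s_two_mul_add_one]
    have := s_lt j
    omega
  · right
    have h1 : s (n + 1) = s (j + 1) := by
      rw [show n + 1 = 2 * (j + 1) by omega, s_two_mul]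
    have h2 : s (n + 2) = (s (j + 1) + 1) % 2 := by
      rw [show n + 2 = 2 * (j + 1) + 1 by omega, s_two_mul_add_one]
    have := s_lt (j + 1)
    omega

lemma no_mixed (a b : ℕ) (h : ∀ i, i < 4 → s (2 * a + i) = s (2 * b + 1 + i)) : False := by
  have h0 := h 0 (by norm_num)
  have h1 := h 1 (by norm_num)
  have h2 := h 2 (by norm_num)
  have h3 := h 3 (by norm_num)
  rw [show 2 * a + 0 = 2 * a by ring, show 2 * b + 1 + 0 = 2 * b + 1 by ring,
    s_two_mul, s_two_mul_add_one] at h0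
  rw [show 2 * b + 1 + 1 = 2 * (b + 1) by ring, s_two_mul_add_one, s_two_mul] at h1
  rw [show 2 * a + 2 = 2 * (a + 1) by ring, show 2 * b + 1 + 2 = 2 * (b + 1) + 1 by ring,
    s_two_mul, s_two_mul_add_one] at h2
  rw [show 2 * a + 3 = 2 * (a + 1) + 1 by ring, show 2 * b + 1 + 3 = 2 * (b + 2) by ring,
    s_two_mul_add_one, s_two_mul] at h3
  have := s_lt a; have := s_lt (a + 1); have := s_lt b
  have := s_lt (b + 1); have := s_lt (b + 2)
  rcases no_ccc b with hc | hc <;> omega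

lemma sync_one (a n m : ℕ) (hm : 4 ≤ m)
    (h : ∀ i, i < m → s (a + i) = s (a + n + i)) : 2 ∣ n := by
  by_contra hodd
  have hn : n % 2 = 1 := by omega
  rcases Nat.even_or_odd a with ⟨a', ha⟩ | ⟨a', ha⟩
  · -- a = 2a' even, a + n odd
    obtain ⟨b', hb⟩ : ∃ b', a + n = 2 * b' + 1 := ⟨(a + n) / 2, by omega⟩
    exact no_mixed a' b' (fun i hi => by
      have := h i (by omega)
      rwa [show a + i = 2 * a' + i by omega, show a + n + i = 2 * b' + 1 + i by omega] at this)
  · -- a = 2a' + 1 odd, a + n even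
    obtain ⟨b', hb⟩ : ∃ b', a + n = 2 * b' := ⟨(a + n) / 2, by omega⟩
    exact no_mixed b' a' (fun i hi => by
      have := (h i (by omega)).symm
      rwa [show a + n + i = 2 * b' + i by omega, show a + i = 2 * a' + 1 + i by omega] at this)

lemma sync (k : ℕ) : ∀ a n m : ℕ, 3 * 2 ^ (k - 1) + 1 ≤ m →
    (∀ i, i < m → s (a + i) = s (a + n + i)) → 2 ^ k ∣ n := by
  induction k with
  | zero => intro a n m _ _; simpa using Nat.one_dvd n
  | succ k ih =>
    intro a n m hm h
    rcases Nat.eq_zero_or_pos k with rfl | hk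
    · simpa using sync_one a n m (by simpa using hm) h
    · have hpow : 2 ^ k = 2 * 2 ^ (k - 1) := by
        rw [← pow_succ']
        congr 1
        omega
      have hm' : 3 * 2 ^ k + 1 ≤ m := by simpa using hm
      have h1 : (1 : ℕ) ≤ 2 ^ k := Nat.one_le_two_pow
      have h4 : 4 ≤ m := by omega
      obtain ⟨n', rfl⟩ := sync_one a n m h4 h
      have hdvd : 2 ^ k ∣ n' := by
        set m' := (m - 1) / 2 + 1 with hm'def
        have hmm : 3 * 2 ^ (k - 1) + 1 ≤ m' := by omega
        rcases Nat.even_or_odd a with ⟨a', ha⟩ | ⟨a', ha⟩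
        · refine ih a' n' m' hmm (fun j hj => ?_)
          have := h (2 * j) (by omega)
          rwa [show a + 2 * j = 2 * (a' + j) by omega,
            show a + 2 * n' + 2 * j = 2 * (a' + n' + j) by omega,
            s_two_mul, s_two_mul] at this
        · refine ih a' n' m' hmm (fun j hj => ?_)
          have hh := h (2 * j) (by omega)
          rw [show a + 2 * j = 2 * (a' + j) + 1 by omega,
            show a + 2 * n' + 2 * j = 2 * (a' + n' + j) + 1 by omega,
            s_two_mul_add_one, s_two_mul_add_one] at hh
          have := s_lt (a' + j)
          have := s_lt (a' + n' + j)
          omega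
      rw [pow_succ']
      exact mul_dvd_mul_left 2 hdvd

lemma delta_bound (m : ℕ) (hm : 2 ≤ m) (hd : 1 ≤ delta m) :
    3 * 2 ^ (delta m - 1) + 1 ≤ m := by
  have hceil : ⌈Real.logb 2 ((m : ℝ) / 3)⌉ = (delta m : ℤ) := by
    simp only [delta] at hd ⊢
    omega
  have hlt : ((delta m : ℝ) - 1) < Real.logb 2 ((m : ℝ) / 3) := by
    by_contra hle
    push_neg at hle
    have h2 : ⌈Real.logb 2 ((m : ℝ) / 3)⌉ ≤ (delta m : ℤ) - 1 := by
      refine Int.ceil_le.mpr ?_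
      push_cast
      exact hle
    omega
  have hy : (0 : ℝ) < (m : ℝ) / 3 := by positivity
  have hrp := (Real.lt_logb_iff_rpow_lt (by norm_num) hy).mp hlt
  have he : ((delta m : ℝ) - 1) = ((delta m - 1 : ℕ) : ℝ) := by
    have h1 : 1 ≤ delta m := hd
    push_cast [h1]
    ring
  rw [he, Real.rpow_natCast] at hrp
  have h3 : ((3 * 2 ^ (delta m - 1) : ℕ) : ℝ) < (m : ℝ) := by
    push_cast
    linarith
  have := Nat.cast_lt.mp h3
  omega

end TMAux

theorem stmt3 (m : ℕ) (hm : 2 ≤ m) (y v : List ℕ)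
    (hfac : IsFactor (y ++ v ++ y)) (hy : y.length = m) :
    2 ^ delta m ∣ (y ++ v).length := by
  rcases Nat.eq_zero_or_pos (delta m) with h0 | h1
  · rw [h0]
    simpa using Nat.one_dvd _
  · obtain ⟨a, ha⟩ := hfac
    have hlen : (y ++ v ++ y).length = m + v.length + m := by
      simp only [List.length_append, hy]
    have hf : ∀ j (hj : j < (y ++ v ++ y).length), (y ++ v ++ y)[j] = tm (a + 1 + j) := by
      intro j hj
      rw [List.getElem_of_eq ha hj]
      simp
    have htm : ∀ j : ℕ, tm (a + 1 + j) = TMAux.s (a + j) := by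
      intro j
      simp only [tm, TMAux.s, show a + 1 + j - 1 = a + j by omega]
    have key : ∀ i, i < m → TMAux.s (a + i) = TMAux.s (a + (m + v.length) + i) := by
      intro i hi
      have hiy : i < y.length := by omega
      have hi1 : i < (y ++ v ++ y).length := by omega
      have hi2 : m + v.length + i < (y ++ v ++ y).length := by omega
      have e1 : (y ++ v ++ y)[i]'hi1 = y[i]'hiy := by
        rw [List.getElem_append_left, List.getElem_append_left] <;> simp [hy] <;> omega
      have e2 : (y ++ v ++ y)[m + v.length + i]'hi2 = y[i]'hiy := by
        rw [List.getElem_append_right (by simp [hy])]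
        congr 1
        simp [hy]
      have q1 := hf i hi1
      have q2 := hf (m + v.length + i) hi2
      rw [e1] at q1
      rw [e2] at q2
      rw [← htm i, ← q1, q2, htm, show a + (m + v.length + i) = a + (m + v.length) + i by ring]
    have hdvd := TMAux.sync (delta m) a (m + v.length) m (TMAux.delta_bound m hm h1) key
    have : (y ++ v).length = m + v.length := by simp [hy]
    rw [this]
    exact hdvd
end

section
/- Let k ≥ 3 and let m be an odd positive integer such that the prefix of the Thue-Morse word of length km is not a k-anti-power. Then k - 1 ≥ 2^{⌈log₂(m/3)⌉}. -/
open Filter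

/-- Thue-Morse sequence indexed from 0. -/
def tms (n : ℕ) : ℕ := (Nat.digits 2 n).sum % 2

lemma tms_le_one (n : ℕ) : tms n ≤ 1 := Nat.lt_succ_iff.mp (Nat.mod_lt _ (by norm_num))

lemma tms_two_mul (n : ℕ) : tms (2 * n) = tms n := by
  rcases Nat.eq_zero_or_pos n with h | h
  · simp [h]
  · unfold tms
    rw [Nat.digits_def' (by norm_num : 1 < 2) (by omega : 0 < 2 * n)]
    simp [Nat.mul_div_cancel_left _ (by norm_num : 0 < 2), Nat.mul_mod_right]

lemma tms_two_mul_add_one (n : ℕ) : tms (2 * n + 1) = (tms n + 1) % 2 := by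
  unfold tms
  rw [Nat.digits_def' (by norm_num : 1 < 2) (by omega : 0 < 2 * n + 1)]
  have h1 : (2 * n + 1) % 2 = 1 := by omega
  have h2 : (2 * n + 1) / 2 = n := by omega
  rw [h1, h2]
  simp [List.sum_cons, Nat.add_mod, Nat.add_comm]

/-- No three consecutive equal letters in Thue-Morse. -/
lemma tms_no_triple (c : ℕ) : ¬ (tms c = tms (c + 1) ∧ tms (c + 1) = tms (c + 2)) := by
  rcases Nat.even_or_odd c with ⟨b, hb⟩ | ⟨b, hb⟩
  · have h1 : tms c = tms b := by rw [hb]; rw [(by ring : b + b = 2 * b)]; exact tms_two_mul b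
    have h2 : tms (c + 1) = (tms b + 1) % 2 := by
      rw [hb, (by ring : b + b + 1 = 2 * b + 1)]; exact tms_two_mul_add_one b
    have := tms_le_one b
    omega
  · have h1 : tms (c + 1) = tms (b + 1) := by
      rw [hb, (by ring : 2 * b + 1 + 1 = 2 * (b + 1))]; exact tms_two_mul (b + 1)
    have h2 : tms (c + 2) = (tms (b + 1) + 1) % 2 := by
      rw [hb, (by ring : 2 * b + 1 + 2 = 2 * (b + 1) + 1)]; exact tms_two_mul_add_one (b + 1)
    have := tms_le_one (b + 1)
    omega

/-- For an odd shift, there is no run of 4 consecutive agreements. -/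
lemma tms_odd_run (f n : ℕ) : ¬ ∀ t, t ≤ 3 → tms (n + t) = tms (n + t + (2 * f + 1)) := by
  intro H
  rcases Nat.even_or_odd n with ⟨a, ha⟩ | ⟨a, ha⟩
  · -- n = 2a
    have ha' : n = 2 * a := by omega
    have H0 := H 0 (by norm_num)
    have H1 := H 1 (by norm_num)
    have H2 := H 2 (by norm_num)
    have H3 := H 3 (by norm_num)
    rw [ha'] at H0 H1 H2 H3
    rw [(by ring : 2 * a + 0 = 2 * a), (by ring : 2 * a + (2 * f + 1) = 2 * (a + f) + 1),
      tms_two_mul, tms_two_mul_add_one] at H0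
    rw [(by ring : 2 * a + 1 + (2 * f + 1) = 2 * (a + f + 1)),
      tms_two_mul_add_one, tms_two_mul] at H1
    rw [(by ring : 2 * a + 2 + (2 * f + 1) = 2 * (a + f + 1) + 1),
      (by ring : 2 * a + 2 = 2 * (a + 1)),
      tms_two_mul, tms_two_mul_add_one] at H2
    rw [(by ring : 2 * a + 3 + (2 * f + 1) = 2 * (a + f + 2)),
      (by ring : 2 * a + 3 = 2 * (a + 1) + 1),
      tms_two_mul_add_one, tms_two_mul] at H3
    have h1 := tms_le_one a
    have h2 := tms_le_one (a + 1)
    have h3 := tms_le_one (a + f)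
    have h4 := tms_le_one (a + f + 1)
    have h5 := tms_le_one (a + f + 2)
    exact tms_no_triple (a + f) ⟨by omega, by omega⟩
  · -- n = 2a + 1
    have H0 := H 0 (by norm_num)
    have H1 := H 1 (by norm_num)
    have H2 := H 2 (by norm_num)
    have H3 := H 3 (by norm_num)
    rw [ha] at H0 H1 H2 H3
    rw [(by ring : 2 * a + 1 + 0 = 2 * a + 1),
      (by ring : 2 * a + 1 + (2 * f + 1) = 2 * (a + f + 1)),
      tms_two_mul_add_one, tms_two_mul] at H0
    rw [(by ring : 2 * a + 1 + 1 + (2 * f + 1) = 2 * (a + f + 1) + 1),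
      (by ring : 2 * a + 1 + 1 = 2 * (a + 1)),
      tms_two_mul, tms_two_mul_add_one] at H1
    rw [(by ring : 2 * a + 1 + 2 + (2 * f + 1) = 2 * (a + f + 2)),
      (by ring : 2 * a + 1 + 2 = 2 * (a + 1) + 1),
      tms_two_mul_add_one, tms_two_mul] at H2
    rw [(by ring : 2 * a + 1 + 3 + (2 * f + 1) = 2 * (a + f + 2) + 1),
      (by ring : 2 * a + 1 + 3 = 2 * (a + 2)),
      tms_two_mul, tms_two_mul_add_one] at H3
    have h1 := tms_le_one a
    have h2 := tms_le_one (a + 1)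
    have h3 := tms_le_one (a + 2)
    have h4 := tms_le_one (a + f + 1)
    have h5 := tms_le_one (a + f + 2)
    exact tms_no_triple a ⟨by omega, by omega⟩

/-- For a shift of the form `2^v * odd`, there is no run of `3 * 2^v + 1`
consecutive agreements in the Thue-Morse sequence. -/
lemma tms_run_bound (v : ℕ) :
    ∀ f n, ¬ ∀ t, t ≤ 3 * 2 ^ v → tms (n + t) = tms (n + t + 2 ^ v * (2 * f + 1)) := by
  induction v with
  | zero =>
    intro f n H
    exact tms_odd_run f n (fun t ht => by
      have := H t (by simpa using ht)
      simpa using this)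
  | succ v ih =>
    intro f n H
    apply ih f (n / 2)
    intro u hu
    have ht : 2 * u ≤ 3 * 2 ^ (v + 1) := by rw [pow_succ]; omega
    have key := H (2 * u) ht
    rcases Nat.even_or_odd n with ⟨b, hb⟩ | ⟨b, hb⟩
    · have hb' : n = 2 * b := by omega
      have hdiv : n / 2 = b := by omega
      rw [hb', (by rw [pow_succ]; ring : 2 * b + 2 * u + 2 ^ (v + 1) * (2 * f + 1)
          = 2 * (b + u + 2 ^ v * (2 * f + 1))),
        (by ring : 2 * b + 2 * u = 2 * (b + u)), tms_two_mul, tms_two_mul] at key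
      rw [hdiv]
      exact key
    · have hdiv : n / 2 = b := by omega
      rw [hb, (by rw [pow_succ]; ring : 2 * b + 1 + 2 * u + 2 ^ (v + 1) * (2 * f + 1)
          = 2 * (b + u + 2 ^ v * (2 * f + 1)) + 1),
        (by ring : 2 * b + 1 + 2 * u = 2 * (b + u) + 1),
        tms_two_mul_add_one, tms_two_mul_add_one] at key
      rw [hdiv]
      have h1 := tms_le_one (b + u)
      have h2 := tms_le_one (b + u + 2 ^ v * (2 * f + 1))
      omega

lemma tm_eq_tms (n : ℕ) : tm (n + 1) = tms n := by
  simp [tm, tms]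

lemma block_eq (m i : ℕ) : block m i = (List.range m).map (fun t => tms (i * m + t)) := by
  unfold block seg
  have hlen : (i + 1) * m + 1 - (i * m + 1) = m := by
    have : (i + 1) * m = i * m + m := by ring
    omega
  rw [hlen]
  apply List.map_congr_left
  intro t _
  rw [(by omega : i * m + 1 + t = (i * m + t) + 1), tm_eq_tms]

/-- If two blocks of odd length `m` coincide, where the second one is the
`(p+r)`-th with `r = 2^v * odd`, then `m ≤ 3 * 2^v`. -/
lemma block_eq_bound (m p v f : ℕ) (hm : Odd m)
    (hblock : block m p = block m (p + 2 ^ v * (2 * f + 1))) : m ≤ 3 * 2 ^ v := by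
  by_contra hcon
  push_neg at hcon
  set q := p + 2 ^ v * (2 * f + 1) with hq
  rw [block_eq, block_eq] at hblock
  have key : ∀ t < m, tms (p * m + t) = tms (q * m + t) := by
    intro t ht
    have := congrArg (fun l => l[t]?) hblock
    simpa [List.getElem?_map, List.getElem?_range, ht] using this
  -- the shift (q - p) * m = 2^v * ((2f+1) * m), and (2f+1)*m is odd
  obtain ⟨g, hg⟩ := (Odd.mul (by exact ⟨f, by ring⟩) hm : Odd ((2 * f + 1) * m))
  apply tms_run_bound v g (p * m)
  intro t htle
  have htm : t < m := by omega
  have := key t htm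
  rw [this]
  congr 1
  have : q * m = p * m + 2 ^ v * ((2 * f + 1) * m) := by rw [hq]; ring
  rw [this, hg]
  ring

theorem stmt6 (k m : ℕ) (hk : 3 ≤ k) (hm : Odd m) (hmpos : 0 < m)
    (h : ¬ IsAntiPowerPrefix m k) : 2 ^ delta m ≤ k - 1 := by
  unfold IsAntiPowerPrefix at h
  push_neg at h
  obtain ⟨i, j, hi, hj, hij, hbl⟩ := h
  -- order them
  obtain ⟨p, q, hpq, hqk, hble⟩ : ∃ p q, p < q ∧ q < k ∧ block m p = block m q := by
    rcases Nat.lt_or_ge i j with hlt | hge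
    · exact ⟨i, j, hlt, hj, hbl⟩
    · exact ⟨j, i, by omega, hi, hbl.symm⟩
  obtain ⟨v, o, hodd, ho⟩ := Nat.exists_eq_two_pow_mul_odd (by omega : q - p ≠ 0)
  obtain ⟨f, hf⟩ := hodd
  have hqp : q = p + 2 ^ v * (2 * f + 1) := by
    rw [← hf, ← ho]
    omega
  have hm3 : m ≤ 3 * 2 ^ v := by
    apply block_eq_bound m p v f hm
    rw [← hqp]; exact hble
  -- δ(m) ≤ v
  have hdelta : delta m ≤ v := by
    unfold delta
    have hlog : Real.logb 2 ((m : ℝ) / 3) ≤ (v : ℝ) := by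
      have h1 : (m : ℝ) / 3 ≤ (2 : ℝ) ^ (v : ℕ) := by
        rw [div_le_iff₀ (by norm_num : (0:ℝ) < 3)]
        calc (m : ℝ) ≤ (3 * 2 ^ v : ℕ) := by exact_mod_cast hm3
          _ = (2 : ℝ) ^ (v : ℕ) * 3 := by push_cast; ring
      calc Real.logb 2 ((m : ℝ) / 3) ≤ Real.logb 2 ((2 : ℝ) ^ (v : ℕ)) := by
            apply Real.logb_le_logb_of_le (by norm_num : (1:ℝ) < 2) _ h1
            positivity
        _ = (v : ℝ) := by
            rw [Real.logb_pow, Real.logb_self_eq_one (by norm_num)]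
            simp
    have : (⌈Real.logb 2 ((m : ℝ) / 3)⌉ : ℤ) ≤ (v : ℤ) := by
      apply Int.ceil_le.mpr
      push_cast
      exact hlog
    omega
  have h2v : 2 ^ v ≤ q - p := by
    rw [ho]
    have : 1 ≤ o := by rw [hf]; omega
    calc 2 ^ v = 2 ^ v * 1 := by ring
      _ ≤ 2 ^ v * o := by exact Nat.mul_le_mul_left _ this
  calc 2 ^ delta m ≤ 2 ^ v := Nat.pow_le_pow_right (by norm_num) hdelta
    _ ≤ q - p := h2v
    _ ≤ k - 1 := by omega
end

section
/- For every integer k ≥ 3, the prefix of the Thue-Morse word of length 3k is not a k-anti-power; equivalently, 3 ∉ F(k) for k ≥ 3. -/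
open Filter

theorem stmt8 (k : ℕ) (hk : 3 ≤ k) : ¬ IsAntiPowerPrefix 3 k := by
  intro h
  exact h 0 2 (by omega) (by omega) (by decide) (by simp [block, seg, tm, List.range_succ])
end

section
/- Suppose r, m, ℓ, h, p, q are nonnegative integers with ℓ ≥ 2 satisfying: h < 2^{ℓ-2}; rm = p·2^{ℓ+1} + 2^{ℓ-1} + h; (r+1)m ≤ p·2^{ℓ+1} + 5·2^{ℓ-2}; (r + 2^{ℓ-2})m = q·2^{ℓ+1} + 3·2^{ℓ-2} + h; and t_{p+1} ≠ t_{q+1}. Then the factors t_{rm+1}...t_{(r+1)m} and t_{(r+2^{ℓ-2})m+1}...t_{(r+2^{ℓ-2}+1)m} of the Thue-Morse word are equal. -/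
open Filter

lemma sumdig : ∀ (k b a : ℕ), a < 2 ^ k →
    (Nat.digits 2 (b * 2 ^ k + a)).sum = (Nat.digits 2 b).sum + (Nat.digits 2 a).sum := by
  intro k
  induction k with
  | zero =>
    intro b a ha
    interval_cases a
    simp
  | succ k ih =>
    intro b a ha
    rcases Nat.eq_zero_or_pos (b * 2 ^ (k + 1) + a) with h0 | h0
    · have hb : b = 0 ∧ a = 0 := by
        constructor <;> nlinarith [Nat.one_le_two_pow (n := k + 1)]
      simp [hb.1, hb.2]
    · rw [Nat.digits_def' (by norm_num : 1 < 2) h0]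
      have hp : b * 2 ^ (k + 1) = 2 * (b * 2 ^ k) := by rw [pow_succ]; ring
      have hp' : 2 ^ (k + 1) = 2 * 2 ^ k := by rw [pow_succ]; ring
      have e1 : (b * 2 ^ (k + 1) + a) % 2 = a % 2 := by omega
      have e2 : (b * 2 ^ (k + 1) + a) / 2 = b * 2 ^ k + a / 2 := by omega
      have ha2 : a / 2 < 2 ^ k := by omega
      rw [List.sum_cons, e1, e2, ih b (a / 2) ha2]
      rcases Nat.eq_zero_or_pos a with ha0 | ha0
      · simp [ha0]
      · rw [Nat.digits_def' (by norm_num : 1 < 2) ha0, List.sum_cons]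
        omega

lemma S23 (L u : ℕ) (hu : u < 3 * 2 ^ L) :
    ((Nat.digits 2 (2 * 2 ^ L + u)).sum + (Nat.digits 2 (3 * 2 ^ L + u)).sum) % 2 = 1 := by
  have c2 : (Nat.digits 2 2).sum = 1 := by simp
  have c3 : (Nat.digits 2 3).sum = 2 := by simp
  have c4 : (Nat.digits 2 4).sum = 1 := by simp
  have c5 : (Nat.digits 2 5).sum = 2 := by simp
  rcases lt_or_ge u (2 ^ L) with h | h
  · rw [sumdig L 2 u h, sumdig L 3 u h, c2, c3]; omega
  rcases lt_or_ge u (2 * 2 ^ L) with h' | h'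
  · have e1 : 2 * 2 ^ L + u = 3 * 2 ^ L + (u - 2 ^ L) := by omega
    have e2 : 3 * 2 ^ L + u = 4 * 2 ^ L + (u - 2 ^ L) := by omega
    have hv : u - 2 ^ L < 2 ^ L := by omega
    rw [e1, e2, sumdig L 3 _ hv, sumdig L 4 _ hv, c3, c4]; omega
  · have e1 : 2 * 2 ^ L + u = 4 * 2 ^ L + (u - 2 * 2 ^ L) := by omega
    have e2 : 3 * 2 ^ L + u = 5 * 2 ^ L + (u - 2 * 2 ^ L) := by omega
    have hv : u - 2 * 2 ^ L < 2 ^ L := by omega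
    rw [e1, e2, sumdig L 4 _ hv, sumdig L 5 _ hv, c4, c5]; omega

theorem stmt10 (r m ℓ h p q : ℕ) (hℓ : 2 ≤ ℓ)
    (h1 : h < 2 ^ (ℓ - 2))
    (h2 : r * m = p * 2 ^ (ℓ + 1) + 2 ^ (ℓ - 1) + h)
    (h3 : (r + 1) * m ≤ p * 2 ^ (ℓ + 1) + 5 * 2 ^ (ℓ - 2))
    (h4 : (r + 2 ^ (ℓ - 2)) * m = q * 2 ^ (ℓ + 1) + 3 * 2 ^ (ℓ - 2) + h)
    (h5 : tm (p + 1) ≠ tm (q + 1)) :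
    seg (r * m + 1) ((r + 1) * m) =
      seg ((r + 2 ^ (ℓ - 2)) * m + 1) ((r + 2 ^ (ℓ - 2) + 1) * m) := by
  set L := ℓ - 2 with hLdef
  have hn : 0 < 2 ^ L := Nat.pow_pos (by norm_num)
  set n := 2 ^ L with hndef
  have hpow1 : 2 ^ (ℓ + 1) = 8 * n := by
    have he : ℓ + 1 = L + 3 := by omega
    rw [hndef, he, pow_add]; ring
  have hpow2 : 2 ^ (ℓ - 1) = 2 * n := by
    have he : ℓ - 1 = L + 1 := by omega
    rw [hndef, he, pow_add]; ring
  have h8 : 2 ^ (L + 3) = 8 * n := by rw [hndef, pow_add]; ring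
  rw [hpow1, hpow2] at h2
  rw [hpow1] at h3 h4
  have hrm1 : (r + 1) * m = r * m + m := by ring
  have hrm2 : (r + n + 1) * m = (r + n) * m + m := by ring
  have hm : h + m ≤ 3 * n := by omega
  unfold seg
  have e1 : (r + 1) * m + 1 - (r * m + 1) = m := by omega
  have e2 : (r + n + 1) * m + 1 - ((r + n) * m + 1) = m := by omega
  rw [e1, e2]
  apply List.map_congr_left
  intro j hj
  rw [List.mem_range] at hj
  unfold tm
  have A : r * m + 1 + j - 1 = p * 2 ^ (L + 3) + (2 * n + (h + j)) := by
    rw [h8]; omega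
  have B : (r + n) * m + 1 + j - 1 = q * 2 ^ (L + 3) + (3 * n + (h + j)) := by
    rw [h8]; omega
  have bA : 2 * n + (h + j) < 2 ^ (L + 3) := by rw [h8]; omega
  have bB : 3 * n + (h + j) < 2 ^ (L + 3) := by rw [h8]; omega
  rw [A, B, sumdig (L + 3) p _ bA, sumdig (L + 3) q _ bB]
  have hs := S23 L (h + j) (by rw [← hndef]; omega)
  unfold tm at h5
  simp only [Nat.add_sub_cancel] at h5
  rw [← hndef] at hs
  omega
end

section
/- For every integer α ≥ 3, setting k_α = 2^{2α} + 2^α + 2 and m = 3·2^{2α} - 2^α + 1, the prefix of the Thue-Morse word of length k_α · m is not a k_α-anti-power; consequently Γ(k_α) ≥ 3·2^{2α} - 2^α + 1. -/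
open Filter

/-- 0-indexed Thue-Morse -/
def u (n : ℕ) : ℕ := (Nat.digits 2 n).sum % 2

lemma u_lt (n : ℕ) : u n < 2 := Nat.mod_lt _ (by norm_num)

lemma u_two_mul (n : ℕ) : u (2 * n) = u n := by
  rcases Nat.eq_zero_or_pos n with h | h
  · simp [h]
  · unfold u
    rw [Nat.digits_def' (by norm_num : 1 < 2) (by omega : 0 < 2 * n)]
    simp [Nat.mul_div_cancel_left, Nat.mul_mod_right]

lemma u_two_mul_add_one (n : ℕ) : u (2 * n + 1) = (u n + 1) % 2 := by
  unfold u
  rw [Nat.digits_def' (by norm_num : 1 < 2) (by omega : 0 < 2 * n + 1)]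
  have h1 : (2 * n + 1) % 2 = 1 := by omega
  have h2 : (2 * n + 1) / 2 = n := by omega
  rw [h1, h2]
  simp [List.sum_cons]
  omega

lemma u0 : u 0 = 0 := by simp [u]
lemma u1 : u 1 = 1 := by have := u_two_mul_add_one 0; simpa [u0] using this
lemma u2 : u 2 = 1 := by have := u_two_mul 1; rw [u1] at this; simpa using this
lemma u3 : u 3 = 0 := by have := u_two_mul_add_one 1; rw [u1] at this; simpa using this
lemma u4 : u 4 = 1 := by have := u_two_mul 2; rw [u2] at this; simpa using this
lemma u5 : u 5 = 0 := by have := u_two_mul_add_one 2; rw [u2] at this; simpa using this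

lemma no_three (n : ℕ) : ¬ (u n = u (n + 1) ∧ u (n + 1) = u (n + 2)) := by
  rintro ⟨h1, h2⟩
  rcases Nat.even_or_odd n with ⟨p, hp⟩ | ⟨p, hp⟩
  · have e1 : n = 2 * p := by omega
    have e2 : n + 1 = 2 * p + 1 := by omega
    rw [e1, u_two_mul, u_two_mul_add_one] at h1
    have := u_lt p; omega
  · have e2 : n + 1 = 2 * (p + 1) := by omega
    have e3 : n + 2 = 2 * (p + 1) + 1 := by omega
    rw [e2, e3, u_two_mul, u_two_mul_add_one] at h2
    have := u_lt (p + 1); omega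

/-- splitting at a power of two -/
lemma usplit : ∀ t x r : ℕ, r < 2 ^ t → u (2 ^ t * x + r) = (u x + u r) % 2 := by
  intro t
  induction t with
  | zero =>
    intro x r hr
    have : r = 0 := by omega
    subst this
    simp [u0]
    exact (Nat.mod_eq_of_lt (u_lt x)).symm
  | succ t ih =>
    intro x r hr
    have hp2 : (2:ℕ) ^ (t + 1) = 2 * 2 ^ t := by ring
    have hx : 2 ^ (t + 1) * x = 2 * (2 ^ t * x) := by ring
    rcases Nat.even_or_odd r with ⟨s, hs⟩ | ⟨s, hs⟩
    · have hs' : s < 2 ^ t := by omega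
      have e1 : 2 ^ (t + 1) * x + r = 2 * (2 ^ t * x + s) := by omega
      have e2 : u r = u s := by
        have hr2 : r = 2 * s := by omega
        rw [hr2, u_two_mul]
      rw [e1, u_two_mul, ih x s hs', e2]
    · have hs' : s < 2 ^ t := by omega
      have e1 : 2 ^ (t + 1) * x + r = 2 * (2 ^ t * x + s) + 1 := by omega
      have e2 : u r = (u s + 1) % 2 := by
        have hr2 : r = 2 * s + 1 := by omega
        rw [hr2, u_two_mul_add_one]
      rw [e1, u_two_mul_add_one, ih x s hs', e2]
      have := u_lt x; have := u_lt s; omega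

lemma doubling {a L e : ℕ} (h : ∀ p, a ≤ p → p < a + L → u (p + e) = u p) :
    ∀ n, 2 * a ≤ n → n < 2 * a + 2 * L → u (n + 2 * e) = u n := by
  intro n h1 h2
  rcases Nat.even_or_odd n with ⟨p, hp⟩ | ⟨p, hp⟩
  · have e1 : n + 2 * e = 2 * (p + e) := by omega
    have e2 : n = 2 * p := by omega
    rw [e1, e2, u_two_mul, u_two_mul, h p (by omega) (by omega)]
  · have e1 : n + 2 * e = 2 * (p + e) + 1 := by omega
    have e2 : n = 2 * p + 1 := by omega
    rw [e1, e2, u_two_mul_add_one, u_two_mul_add_one, h p (by omega) (by omega)]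

lemma pow_shift (v : ℕ) {a L e : ℕ} (h : ∀ p, a ≤ p → p < a + L → u (p + e) = u p) :
    ∀ n, 2 ^ v * a ≤ n → n < 2 ^ v * a + 2 ^ v * L → u (n + 2 ^ v * e) = u n := by
  induction v with
  | zero => simpa using h
  | succ v ih =>
    have h2 : ∀ n, 2 * (2 ^ v * a) ≤ n → n < 2 * (2 ^ v * a) + 2 * (2 ^ v * L) →
        u (n + 2 * (2 ^ v * e)) = u n := doubling ih
    intro n hn1 hn2
    have ea : 2 ^ (v + 1) * a = 2 * (2 ^ v * a) := by ring
    have eL : 2 ^ (v + 1) * L = 2 * (2 ^ v * L) := by ring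
    have ee : 2 ^ (v + 1) * e = 2 * (2 ^ v * e) := by ring
    rw [ee]
    exact h2 n (by omega) (by omega)

/-- if a window of length m is fixed by an odd shift, then m ≤ 4 -/
lemma odd_shift_bound {a m d : ℕ} (hd : Odd d)
    (h : ∀ n, a ≤ n → n < a + m → u (n + d) = u n) : m ≤ 4 := by
  by_contra hm
  push_neg at hm
  obtain ⟨e, he⟩ := hd
  set p := (a + 1) / 2 with hp
  have hpa : a ≤ 2 * p ∧ 2 * p ≤ a + 1 := by omega
  have h1 := h (2 * p) (by omega) (by omega)
  have h2 := h (2 * p + 1) (by omega) (by omega)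
  have h3 := h (2 * p + 2) (by omega) (by omega)
  have h4 := h (2 * p + 3) (by omega) (by omega)
  have e1 : 2 * p + d = 2 * (p + e) + 1 := by omega
  have e2 : 2 * p + 1 + d = 2 * (p + e + 1) := by omega
  have e3 : 2 * p + 2 + d = 2 * (p + e + 1) + 1 := by omega
  have e4 : 2 * p + 3 + d = 2 * (p + e + 2) := by omega
  have e5 : 2 * p + 2 = 2 * (p + 1) := by omega
  have e6 : 2 * p + 3 = 2 * (p + 1) + 1 := by omega
  rw [e1, u_two_mul_add_one, u_two_mul] at h1
  rw [e2, u_two_mul, u_two_mul_add_one] at h2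
  rw [e3, e5, u_two_mul_add_one, u_two_mul] at h3
  rw [e4, e6, u_two_mul, u_two_mul_add_one] at h4
  have q1 := u_lt p
  have q2 := u_lt (p + 1)
  have q3 := u_lt (p + e)
  have q4 := u_lt (p + e + 1)
  have q5 := u_lt (p + e + 2)
  apply no_three (p + e)
  exact ⟨by omega, by omega⟩

lemma shift_bound : ∀ (v : ℕ) (a m d : ℕ), Odd d →
    (∀ n, a ≤ n → n < a + m → u (n + 2 ^ v * d) = u n) → m + 2 ≤ 6 * 2 ^ v := by
  intro v
  induction v with
  | zero =>
    intro a m d hd h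
    simp only [pow_zero, one_mul] at h
    have := odd_shift_bound hd h
    omega
  | succ v ih =>
    intro a m d hd h
    -- reduce to half window
    have h' : ∀ p, (a + 1) / 2 ≤ p → p < (a + 1) / 2 + m / 2 → u (p + 2 ^ v * d) = u p := by
      intro p hp1 hp2
      have hn := h (2 * p) (by omega) (by omega)
      have e1 : 2 * p + 2 ^ (v + 1) * d = 2 * (p + 2 ^ v * d) := by
        have : 2 ^ (v + 1) * d = 2 * (2 ^ v * d) := by ring
        omega
      rw [e1, u_two_mul, u_two_mul] at hn
      exact hn
    have := ih ((a + 1) / 2) (m / 2) d hd h'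
    have hpe : (2:ℕ) ^ (v + 1) = 2 * 2 ^ v := by ring
    omega

lemma block_eq_map (m i : ℕ) : block m i = (List.range m).map (fun s => u (i * m + s)) := by
  unfold block seg
  have h0 : (i + 1) * m = i * m + m := by ring
  have h1 : (i + 1) * m + 1 - (i * m + 1) = m := by omega
  rw [h1]
  apply List.map_congr_left
  intro s _
  show tm (i * m + 1 + s) = u (i * m + s)
  have h2 : i * m + 1 + s - 1 = i * m + s := by omega
  simp [tm, u, h2]

lemma block_pointwise {m i j : ℕ} (h : block m i = block m j) :
    ∀ s, s < m → u (i * m + s) = u (j * m + s) := by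
  rw [block_eq_map, block_eq_map] at h
  intro s hs
  have h1 := congrArg (fun l : List ℕ => l.getD s 0) h
  simpa [List.getD_eq_getElem?_getD, List.getElem?_map, List.getElem?_range, hs] using h1

lemma pair_bound {m i j : ℕ} (hij : i < j) (hm : Odd m) (hb : block m i = block m j) :
    m + 2 ≤ 6 * (j - i) := by
  have hm1 : 1 ≤ m := hm.pos
  have hpw := block_pointwise hb
  have hd0 : (j - i) * m ≠ 0 := Nat.mul_ne_zero (by omega) (by omega)
  obtain ⟨v, c, hc, hvc⟩ := Nat.exists_eq_two_pow_mul_odd hd0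
  have hwin : ∀ n, i * m ≤ n → n < i * m + m → u (n + 2 ^ v * c) = u n := by
    intro n hn1 hn2
    have hs : n - i * m < m := by omega
    have hval := hpw (n - i * m) hs
    have e1 : i * m + (n - i * m) = n := by omega
    have h3 : (j - i) * m + i * m = j * m := by
      rw [← Nat.add_mul, Nat.sub_add_cancel hij.le]
    have e2 : j * m + (n - i * m) = n + (j - i) * m := by omega
    rw [e1, e2] at hval
    rw [← hvc]
    exact hval.symm
  have hb1 := shift_bound v (i * m) m c hc hwin
  have hdvd : 2 ^ v ∣ (j - i) * m := ⟨c, hvc⟩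
  have hcop : Nat.Coprime (2 ^ v) m := by
    apply Nat.Coprime.pow_left
    refine (Nat.prime_two.coprime_iff_not_dvd).mpr ?_
    have := Nat.odd_iff.mp hm
    omega
  have hdvd2 : 2 ^ v ∣ j - i := hcop.dvd_of_dvd_mul_right hdvd
  have hle : 2 ^ v ≤ j - i := Nat.le_of_dvd (by omega) hdvd2
  omega

theorem stmt11 (α : ℕ) (hα : 3 ≤ α) :
    ¬ IsAntiPowerPrefix (3 * 2 ^ (2 * α) - 2 ^ α + 1) (2 ^ (2 * α) + 2 ^ α + 2) ∧
      3 * 2 ^ (2 * α) - 2 ^ α + 1 ≤ Gam (2 ^ (2 * α) + 2 ^ α + 2) := by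
  set P := 2 ^ α with hPdef
  set Q := 2 ^ (2 * α) with hQdef
  have hQ : Q = P * P := by rw [hQdef, hPdef, two_mul, pow_add]
  have hP8 : 8 ≤ P := by
    rw [hPdef]
    calc (8:ℕ) = 2 ^ 3 := by norm_num
      _ ≤ 2 ^ α := Nat.pow_le_pow_right (by norm_num) hα
  have hPQ : 8 * P ≤ Q := by nlinarith
  set m := 3 * Q - P + 1 with hmdef
  have hm : m + P = 3 * Q + 1 := by omega
  have h2P : 2 ∣ P := by rw [hPdef]; exact dvd_pow_self 2 (by omega)
  have h2Q : 2 ∣ Q := by rw [hQdef]; exact dvd_pow_self 2 (by omega)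
  have hodd : Odd m := by rw [Nat.odd_iff]; omega
  -- base window values
  have hu2P3 : u (2 ^ α * 2 + 3) = 1 := by
    rw [usplit α 2 3 (by omega), u2, u3]
  have hu2P4 : u (2 ^ α * 2 + 4) = 0 := by
    have e : 2 ^ α * 2 + 4 = 2 * (2 ^ α * 1 + 2) := by ring
    rw [e, u_two_mul, usplit α 1 2 (by omega), u1, u2]
  have hu2P5 : u (2 ^ α * 2 + 5) = 1 := by
    rw [usplit α 2 5 (by omega), u2, u5]
  have hrQ : 2 ^ α * 2 + 5 < 2 ^ (2 * α) := by omega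
  have uA : u (2 ^ α * 3 + 2) = 1 := by rw [usplit α 3 2 (by omega), u3, u2]
  have uB : u (2 ^ α * 3 + 3) = 0 := by rw [usplit α 3 3 (by omega), u3]
  have uC : u (2 ^ α * 3 + 4) = 1 := by rw [usplit α 3 4 (by omega), u3, u4]
  have uA' : u (2 ^ (2 * α) * 3 + (2 ^ α * 2 + 3)) = 1 := by
    rw [usplit (2 * α) 3 _ (by omega), u3, hu2P3]
  have uB' : u (2 ^ (2 * α) * 3 + (2 ^ α * 2 + 4)) = 0 := by
    rw [usplit (2 * α) 3 _ (by omega), u3, hu2P4]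
  have uC' : u (2 ^ (2 * α) * 3 + (2 ^ α * 2 + 5)) = 1 := by
    rw [usplit (2 * α) 3 _ (by omega), u3, hu2P5]
  have base : ∀ p, 3 * P + 2 ≤ p → p < 3 * P + 2 + 3 → u (p + m) = u p := by
    intro p h1 h2
    have hcases : p = 3 * P + 2 ∨ p = 3 * P + 3 ∨ p = 3 * P + 4 := by omega
    rcases hcases with h | h | h
    · have e1 : p + m = 2 ^ (2 * α) * 3 + (2 ^ α * 2 + 3) := by omega
      have e2 : p = 2 ^ α * 3 + 2 := by omega
      rw [e1, e2, uA', uA]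
    · have e1 : p + m = 2 ^ (2 * α) * 3 + (2 ^ α * 2 + 4) := by omega
      have e2 : p = 2 ^ α * 3 + 3 := by omega
      rw [e1, e2, uB', uB]
    · have e1 : p + m = 2 ^ (2 * α) * 3 + (2 ^ α * 2 + 5) := by omega
      have e2 : p = 2 ^ α * 3 + 4 := by omega
      rw [e1, e2, uC', uC]
  have him : (P + 1) * m = Q * (3 * P + 2) + 1 := by
    have h4 : P * (m + P) = P * (3 * Q + 1) := by rw [hm]
    nlinarith [h4, hQ]
  have hblock : block m (P + 1) = block m (Q + P + 1) := by
    rw [block_eq_map, block_eq_map]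
    apply List.map_congr_left
    intro s hs
    simp only [List.mem_range] at hs
    have HH := pow_shift (2 * α) base
    rw [← hQdef] at HH
    have hjm : (Q + P + 1) * m + s = ((P + 1) * m + s) + Q * m := by ring
    rw [hjm]
    exact (HH ((P + 1) * m + s) (by omega) (by omega)).symm
  have hnot : ¬ IsAntiPowerPrefix m (Q + P + 2) := by
    intro hA
    exact hA (P + 1) (Q + P + 1) (by omega) (by omega) (by omega) hblock
  refine ⟨hnot, ?_⟩
  unfold Gam
  apply le_csSup
  · refine ⟨6 * (Q + P + 2), ?_⟩
    rintro m' ⟨hm', hnot'⟩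
    unfold IsAntiPowerPrefix at hnot'
    push_neg at hnot'
    obtain ⟨i, j, hi, hj, hne, hbe⟩ := hnot'
    rcases Nat.lt_or_ge i j with h | h
    · have := pair_bound h hm' hbe
      omega
    · have hji : j < i := by omega
      have := pair_bound hji hm' hbe.symm
      omega
  · exact ⟨hodd, hnot⟩
end

section
/- liminf_{k→∞} Γ(k)/k = 3/2, where Γ(k) is the largest odd positive integer m such that the length-km prefix of the Thue-Morse word is not a k-anti-power. -/
open Filter

def S (x : ℕ) : ℕ := (Nat.digits 2 x).sum % 2

lemma S_lt (x : ℕ) : S x < 2 := Nat.mod_lt _ (by norm_num)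

lemma S_two_mul (x : ℕ) : S (2 * x) = S x := by
  rcases Nat.eq_zero_or_pos x with h | h
  · simp [h]
  · unfold S
    rw [Nat.digits_def' (by norm_num : 1 < 2) (by omega : 0 < 2 * x)]
    simp [Nat.mul_div_cancel_left _ (by norm_num : 0 < 2), Nat.mul_mod_right]

lemma S_two_mul_add_one (x : ℕ) : S (2 * x + 1) = (S x + 1) % 2 := by
  unfold S
  rw [Nat.digits_def' (by norm_num : 1 < 2) (by omega : 0 < 2 * x + 1)]
  have h1 : (2 * x + 1) % 2 = 1 := by omega
  have h2 : (2 * x + 1) / 2 = x := by omega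
  rw [h1, h2]
  simp [List.sum_cons]
  omega

lemma no3 (y : ℕ) (h1 : S y = S (y + 1)) (h2 : S (y + 1) = S (y + 2)) : False := by
  rcases Nat.even_or_odd y with ⟨z, hz⟩ | ⟨z, hz⟩
  · have e1 : S y = S z := by rw [show y = 2 * z by omega, S_two_mul]
    have e2 : S (y + 1) = (S z + 1) % 2 := by
      rw [show y + 1 = 2 * z + 1 by omega, S_two_mul_add_one]
    have := S_lt z
    omega
  · have e1 : S (y + 1) = S (z + 1) := by rw [show y + 1 = 2 * (z + 1) by omega, S_two_mul]
    have e2 : S (y + 2) = (S (z + 1) + 1) % 2 := by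
      rw [show y + 2 = 2 * (z + 1) + 1 by omega, S_two_mul_add_one]
    have := S_lt (z + 1)
    omega

lemma half_iff (N x : ℕ) : (S (x + 2 * N) = S x) ↔ (S (x / 2 + N) = S (x / 2)) := by
  rcases Nat.even_or_odd x with ⟨z, hz⟩ | ⟨z, hz⟩
  · have e1 : S (x + 2 * N) = S (z + N) := by
      rw [show x + 2 * N = 2 * (z + N) by omega, S_two_mul]
    have e2 : S x = S z := by rw [show x = 2 * z by omega, S_two_mul]
    have e3 : x / 2 = z := by omega
    rw [e1, e2, e3]
  · have e1 : S (x + 2 * N) = (S (z + N) + 1) % 2 := by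
      rw [show x + 2 * N = 2 * (z + N) + 1 by omega, S_two_mul_add_one]
    have e2 : S x = (S z + 1) % 2 := by rw [show x = 2 * z + 1 by omega, S_two_mul_add_one]
    have e3 : x / 2 = z := by omega
    rw [e1, e2, e3]
    have := S_lt (z + N); have := S_lt z
    omega

lemma pow_half_iff (v N x : ℕ) : (S (x + 2 ^ v * N) = S x) ↔ (S (x / 2 ^ v + N) = S (x / 2 ^ v)) := by
  induction v generalizing N x with
  | zero => simp
  | succ v ih =>
    rw [show 2 ^ (v + 1) * N = 2 ^ v * (2 * N) by ring, ih, half_iff,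
      Nat.div_div_eq_div_mul, ← pow_succ]

lemma noFour (N x : ℕ) (hN : Odd N) (h : ∀ t, t < 4 → S (x + t + N) = S (x + t)) : False := by
  obtain ⟨M, hM⟩ := hN
  have h0 := h 0 (by norm_num)
  have h1 := h 1 (by norm_num)
  have h2 := h 2 (by norm_num)
  have h3 := h 3 (by norm_num)
  rcases Nat.even_or_odd x with ⟨y, hy⟩ | ⟨y, hy⟩
  · rw [show x + 0 + N = 2 * (y + M) + 1 by omega, S_two_mul_add_one,
      show x + 0 = 2 * y by omega, S_two_mul] at h0
    rw [show x + 1 + N = 2 * (y + M + 1) by omega, S_two_mul,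
      show x + 1 = 2 * y + 1 by omega, S_two_mul_add_one] at h1
    rw [show x + 2 + N = 2 * (y + M + 1) + 1 by omega, S_two_mul_add_one,
      show x + 2 = 2 * (y + 1) by omega, S_two_mul] at h2
    rw [show x + 3 + N = 2 * (y + M + 2) by omega, S_two_mul,
      show x + 3 = 2 * (y + 1) + 1 by omega, S_two_mul_add_one] at h3
    have := S_lt (y + M); have := S_lt (y + M + 1); have := S_lt (y + M + 2)
    have := S_lt y; have := S_lt (y + 1)
    exact no3 (y + M) (by omega) (by omega)
  · rw [show x + 0 + N = 2 * (y + M + 1) by omega, S_two_mul,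
      show x + 0 = 2 * y + 1 by omega, S_two_mul_add_one] at h0
    rw [show x + 1 + N = 2 * (y + M + 1) + 1 by omega, S_two_mul_add_one,
      show x + 1 = 2 * (y + 1) by omega, S_two_mul] at h1
    rw [show x + 2 + N = 2 * (y + M + 2) by omega, S_two_mul,
      show x + 2 = 2 * (y + 1) + 1 by omega, S_two_mul_add_one] at h2
    rw [show x + 3 + N = 2 * (y + M + 2) + 1 by omega, S_two_mul_add_one,
      show x + 3 = 2 * (y + 2) by omega, S_two_mul] at h3
    have := S_lt (y + M + 1); have := S_lt (y + M + 2)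
    have := S_lt y; have := S_lt (y + 1); have := S_lt (y + 2)
    exact no3 y (by omega) (by omega)

lemma div_exists (P a L y : ℕ) (hP : 0 < P) (hL : 0 < L) (h1 : a / P ≤ y)
    (h2 : y ≤ (a + L - 1) / P) : ∃ t, t < L ∧ (a + t) / P = y := by
  by_cases hc : a ≤ P * y
  · have hub : P * y ≤ a + L - 1 := by
      calc P * y ≤ P * ((a + L - 1) / P) := Nat.mul_le_mul_left P h2
        _ ≤ a + L - 1 := Nat.mul_div_le _ _
    refine ⟨P * y - a, by omega, ?_⟩
    rw [show a + (P * y - a) = P * y by omega, Nat.mul_div_cancel_left _ hP]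
  · have hy : y ≤ a / P := (Nat.le_div_iff_mul_le hP).2 (by rw [mul_comm]; omega)
    refine ⟨0, hL, ?_⟩
    rw [add_zero]
    omega

lemma runBound (v N a L : ℕ) (hN : Odd N) (h : ∀ t, t < L → S (a + t + 2 ^ v * N) = S (a + t)) :
    L ≤ 3 * 2 ^ v := by
  by_contra hL
  push_neg at hL
  have hP : 0 < 2 ^ v := Nat.pow_pos (by norm_num)
  have key : ∀ u, u < 4 → S (a / 2 ^ v + u + N) = S (a / 2 ^ v + u) := by
    intro u hu
    have hdm : (a + 2 ^ v * 3) / 2 ^ v = a / 2 ^ v + 3 := Nat.add_mul_div_left a 3 hP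
    have hmono : (a + 2 ^ v * 3) / 2 ^ v ≤ (a + L - 1) / 2 ^ v :=
      Nat.div_le_div_right (by omega)
    obtain ⟨t, htL, hdiv⟩ := div_exists (2 ^ v) a L (a / 2 ^ v + u) hP (by omega)
      (by omega) (by omega)
    have := (pow_half_iff v N (a + t)).1 (h t htL)
    rw [hdiv] at this
    exact this
  exact noFour N (a / 2 ^ v) hN key

lemma S_zero : S 0 = 0 := by simp [S]
lemma S_one : S 1 = 1 := by rw [show (1:ℕ) = 2 * 0 + 1 from rfl, S_two_mul_add_one, S_zero]
lemma S_two : S 2 = 1 := by rw [show (2:ℕ) = 2 * 1 from rfl, S_two_mul, S_one]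
lemma S_three : S 3 = 0 := by rw [show (3:ℕ) = 2 * 1 + 1 from rfl, S_two_mul_add_one, S_one]
lemma S_four : S 4 = 1 := by rw [show (4:ℕ) = 2 * 2 from rfl, S_two_mul, S_two]
lemma S_five : S 5 = 0 := by rw [show (5:ℕ) = 2 * 2 + 1 from rfl, S_two_mul_add_one, S_two]

lemma S_pow_add (t c : ℕ) (hc : c < 2 ^ t) : S (2 ^ t + c) = (S c + 1) % 2 := by
  induction t generalizing c with
  | zero =>
    have : c = 0 := by omega
    subst this
    simp [S_one, S_zero]
  | succ t ih =>
    have h2 : (2:ℕ) ^ (t + 1) = 2 * 2 ^ t := by rw [pow_succ]; ring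
    rcases Nat.even_or_odd c with ⟨z, hz⟩ | ⟨z, hz⟩
    · have hz' : z < 2 ^ t := by omega
      rw [show 2 ^ (t + 1) + c = 2 * (2 ^ t + z) by omega, S_two_mul, ih z hz',
        show c = 2 * z by omega, S_two_mul]
    · have hz' : z < 2 ^ t := by omega
      rw [show 2 ^ (t + 1) + c = 2 * (2 ^ t + z) + 1 by omega, S_two_mul_add_one, ih z hz',
        show c = 2 * z + 1 by omega, S_two_mul_add_one]

lemma S_pow (t : ℕ) : S (2 ^ t) = 1 := by
  rcases Nat.eq_zero_or_pos t with h | h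
  · subst h; exact S_one
  · have : (2:ℕ) ^ t = 2 ^ t + 0 := by omega
    rw [this, S_pow_add t 0 (Nat.pow_pos (by norm_num)), S_zero]

lemma S_sub1 (t : ℕ) : S (2 ^ t - 1) = t % 2 := by
  induction t with
  | zero => simp [S_zero]
  | succ t ih =>
    have h2 : (2:ℕ) ^ (t + 1) = 2 * 2 ^ t := by rw [pow_succ]; ring
    have hp : 0 < (2:ℕ) ^ t := Nat.pow_pos (by norm_num)
    rw [show 2 ^ (t + 1) - 1 = 2 * (2 ^ t - 1) + 1 by omega, S_two_mul_add_one, ih]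
    omega

lemma S_sub2 (t : ℕ) (ht : 1 ≤ t) : S (2 ^ t - 2) = (t + 1) % 2 := by
  have hp : (2:ℕ) ^ t = 2 * 2 ^ (t - 1) := by
    rw [← pow_succ']; congr 1; omega
  have hp' : 0 < (2:ℕ) ^ (t - 1) := Nat.pow_pos (by norm_num)
  rw [show 2 ^ t - 2 = 2 * (2 ^ (t - 1) - 1) by omega, S_two_mul, S_sub1]
  omega

lemma S_sub3 (t : ℕ) (ht : 2 ≤ t) : S (2 ^ t - 3) = (t + 1) % 2 := by
  have hp : (2:ℕ) ^ t = 2 * 2 ^ (t - 1) := by rw [← pow_succ']; congr 1; omega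
  have hp' : 2 ≤ (2:ℕ) ^ (t - 1) := by
    calc (2:ℕ) = 2 ^ 1 := rfl
      _ ≤ 2 ^ (t - 1) := Nat.pow_le_pow_right (by norm_num) (by omega)
  rw [show 2 ^ t - 3 = 2 * (2 ^ (t - 1) - 2) + 1 by omega, S_two_mul_add_one,
    S_sub2 _ (by omega)]
  omega

lemma S_sub4 (t : ℕ) (ht : 2 ≤ t) : S (2 ^ t - 4) = t % 2 := by
  have hp : (2:ℕ) ^ t = 2 * 2 ^ (t - 1) := by rw [← pow_succ']; congr 1; omega
  have hp' : 2 ≤ (2:ℕ) ^ (t - 1) := by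
    calc (2:ℕ) = 2 ^ 1 := rfl
      _ ≤ 2 ^ (t - 1) := Nat.pow_le_pow_right (by norm_num) (by omega)
  rw [show 2 ^ t - 4 = 2 * (2 ^ (t - 1) - 2) by omega, S_two_mul, S_sub2 _ (by omega)]
  omega

lemma S_sub5 (t : ℕ) (ht : 3 ≤ t) : S (2 ^ t - 5) = (t + 1) % 2 := by
  have hp : (2:ℕ) ^ t = 2 * 2 ^ (t - 1) := by rw [← pow_succ']; congr 1; omega
  have hp' : 4 ≤ (2:ℕ) ^ (t - 1) := by
    calc (4:ℕ) = 2 ^ 2 := rfl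
      _ ≤ 2 ^ (t - 1) := Nat.pow_le_pow_right (by norm_num) (by omega)
  rw [show 2 ^ t - 5 = 2 * (2 ^ (t - 1) - 3) + 1 by omega, S_two_mul_add_one,
    S_sub3 _ (by omega)]
  omega

lemma S_sub7 (t : ℕ) (ht : 3 ≤ t) : S (2 ^ t - 7) = t % 2 := by
  have hp : (2:ℕ) ^ t = 2 * 2 ^ (t - 1) := by rw [← pow_succ']; congr 1; omega
  have hp' : 4 ≤ (2:ℕ) ^ (t - 1) := by
    calc (4:ℕ) = 2 ^ 2 := rfl
      _ ≤ 2 ^ (t - 1) := Nat.pow_le_pow_right (by norm_num) (by omega)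
  rw [show 2 ^ t - 7 = 2 * (2 ^ (t - 1) - 4) + 1 by omega, S_two_mul_add_one,
    S_sub4 _ (by omega)]
  omega

lemma S_sub12 (t : ℕ) (ht : 4 ≤ t) : S (2 ^ t - 12) = (t + 1) % 2 := by
  have hp : (2:ℕ) ^ t = 2 * 2 ^ (t - 1) := by rw [← pow_succ']; congr 1; omega
  have hp' : 8 ≤ (2:ℕ) ^ (t - 1) := by
    calc (8:ℕ) = 2 ^ 3 := rfl
      _ ≤ 2 ^ (t - 1) := Nat.pow_le_pow_right (by norm_num) (by omega)
  rw [show 2 ^ t - 12 = 2 * (2 ^ (t - 1) - 6) by omega, S_two_mul]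
  have hp2 : (2:ℕ) ^ (t-1) = 2 * 2 ^ (t - 2) := by rw [← pow_succ']; congr 1; omega
  have hp2' : 4 ≤ (2:ℕ) ^ (t - 2) := by
    calc (4:ℕ) = 2 ^ 2 := rfl
      _ ≤ 2 ^ (t - 2) := Nat.pow_le_pow_right (by norm_num) (by omega)
  rw [show 2 ^ (t-1) - 6 = 2 * (2 ^ (t - 2) - 3) by omega, S_two_mul, S_sub3 _ (by omega)]
  omega

lemma S_sub13 (t : ℕ) (ht : 4 ≤ t) : S (2 ^ t - 13) = t % 2 := by
  have hp : (2:ℕ) ^ t = 2 * 2 ^ (t - 1) := by rw [← pow_succ']; congr 1; omega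
  have hp' : 8 ≤ (2:ℕ) ^ (t - 1) := by
    calc (8:ℕ) = 2 ^ 3 := rfl
      _ ≤ 2 ^ (t - 1) := Nat.pow_le_pow_right (by norm_num) (by omega)
  rw [show 2 ^ t - 13 = 2 * (2 ^ (t - 1) - 7) + 1 by omega, S_two_mul_add_one,
    S_sub7 _ (by omega)]
  omega

lemma S_sub14 (t : ℕ) (ht : 4 ≤ t) : S (2 ^ t - 14) = (t + 1) % 2 := by
  have hp : (2:ℕ) ^ t = 2 * 2 ^ (t - 1) := by rw [← pow_succ']; congr 1; omega
  have hp' : 8 ≤ (2:ℕ) ^ (t - 1) := by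
    calc (8:ℕ) = 2 ^ 3 := rfl
      _ ≤ 2 ^ (t - 1) := Nat.pow_le_pow_right (by norm_num) (by omega)
  rw [show 2 ^ t - 14 = 2 * (2 ^ (t - 1) - 7) by omega, S_two_mul, S_sub7 _ (by omega)]
  omega

lemma pow2_mod3 (v : ℕ) : 2 ^ v % 3 = 1 + v % 2 := by
  induction v with
  | zero => simp
  | succ v ih =>
    rw [pow_succ, Nat.mul_mod, ih]
    rcases Nat.mod_two_eq_zero_or_one v with h | h <;> rw [h] <;> norm_num <;> omega

lemma tm_succ (x : ℕ) : tm (x + 1) = S x := by simp [tm, S]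

lemma block_eq_iff (m i j : ℕ) :
    block m i = block m j ↔ ∀ t, t < m → S (i * m + t) = S (j * m + t) := by
  have hlen : ∀ i : ℕ, (i + 1) * m + 1 - (i * m + 1) = m := by
    intro i; rw [add_one_mul]; omega
  unfold block seg
  rw [hlen, hlen]
  constructor
  · intro h t ht
    have h2 : ((List.range m).map (fun u => tm (i * m + 1 + u)))[t]'(by simpa using ht) =
        ((List.range m).map (fun u => tm (j * m + 1 + u)))[t]'(by simpa using ht) :=
      List.getElem_of_eq h _
    simp only [List.getElem_map, List.getElem_range] at h2
    rw [show i * m + 1 + t = (i * m + t) + 1 by omega,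
      show j * m + 1 + t = (j * m + t) + 1 by omega, tm_succ, tm_succ] at h2
    exact h2
  · intro h
    apply List.ext_getElem (by simp)
    intro t h1 h2
    simp only [List.getElem_map, List.getElem_range]
    have ht : t < m := by simpa using h1
    rw [show i * m + 1 + t = (i * m + t) + 1 by omega,
      show j * m + 1 + t = (j * m + t) + 1 by omega, tm_succ, tm_succ]
    exact h t ht

lemma bad_pair {m i j : ℕ} (hm : Odd m) (hij : i < j) (heq : block m i = block m j) :
    ∃ v, 2 ^ v ≤ j - i ∧ m ≤ 3 * 2 ^ v := by
  have hd : j - i ≠ 0 := by omega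
  obtain ⟨v, e, hne, hde⟩ := Nat.exists_eq_pow_mul_and_not_dvd hd 2 (by norm_num)
  have he : Odd e := Nat.odd_iff.2 (by
    rcases Nat.even_or_odd e with he | he
    · exact absurd he.two_dvd hne
    · exact Nat.odd_iff.1 he)
  have hN : Odd (e * m) := he.mul hm
  have hrun : ∀ t, t < m → S (i * m + t + 2 ^ v * (e * m)) = S (i * m + t) := by
    intro t ht
    have h1 := (block_eq_iff m i j).1 heq t ht
    have e1 : j * m + t = i * m + t + 2 ^ v * (e * m) := by
      have : j = i + 2 ^ v * e := by omega
      rw [this]; ring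
    rw [e1] at h1
    exact h1.symm
  have hb := runBound v (e * m) (i * m) m hN hrun
  have he1 : 1 ≤ e := by
    rcases Nat.eq_zero_or_pos e with h | h
    · exfalso; exact hne (h ▸ dvd_zero 2)
    · exact h
  exact ⟨v, by calc 2 ^ v = 2 ^ v * 1 := by ring
    _ ≤ 2 ^ v * e := Nat.mul_le_mul_left _ he1
    _ = j - i := hde.symm, hb⟩

lemma bad_bound {m k : ℕ} (hm : Odd m) (h : ¬ IsAntiPowerPrefix m k) :
    ∃ v d, 0 < d ∧ d < k ∧ 2 ^ v ≤ d ∧ m ≤ 3 * 2 ^ v := by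
  unfold IsAntiPowerPrefix at h
  push_neg at h
  obtain ⟨i, j, hik, hjk, hij, heq⟩ := h
  rcases Nat.lt_or_ge i j with hlt | hge
  · obtain ⟨v, h1, h2⟩ := bad_pair hm hlt heq
    exact ⟨v, j - i, by omega, by omega, h1, h2⟩
  · have hlt : j < i := by omega
    obtain ⟨v, h1, h2⟩ := bad_pair hm hlt heq.symm
    exact ⟨v, i - j, by omega, by omega, h1, h2⟩

lemma Gam_le_mul (k : ℕ) : Gam k ≤ 3 * k := by
  apply csSup_le'
  rintro m ⟨hodd, hbad⟩
  obtain ⟨v, d, hd0, hdk, hvd, hm3⟩ := bad_bound hodd hbad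
  have : 2 ^ v ≤ k := by omega
  omega

lemma Gam_pow_le (n : ℕ) (hn : 1 ≤ n) : Gam (2 ^ n) ≤ 3 * 2 ^ (n - 1) := by
  apply csSup_le'
  rintro m ⟨hodd, hbad⟩
  obtain ⟨v, d, hd0, hdk, hvd, hm3⟩ := bad_bound hodd hbad
  have h1 : 2 ^ v < 2 ^ n := by omega
  have hv : v < n := by
    by_contra hc
    have := Nat.pow_le_pow_right (by norm_num : 0 < 2) (by omega : n ≤ v)
    omega
  have : (2:ℕ) ^ v ≤ 2 ^ (n - 1) := Nat.pow_le_pow_right (by norm_num) (by omega)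
  omega

lemma Gam_ge {k m i v : ℕ} (hodd : Odd m) (hjk : i + 2 ^ v < k)
    (heq : block m i = block m (i + 2 ^ v)) : m ≤ Gam k := by
  have hP : 0 < 2 ^ v := Nat.pow_pos (by norm_num)
  apply le_csSup
  · refine ⟨3 * k, ?_⟩
    rintro x ⟨ho, hb⟩
    obtain ⟨v', d, hd0, hdk, hvd, hm3⟩ := bad_bound ho hb
    have : 2 ^ v' ≤ k := by omega
    omega
  · refine ⟨hodd, fun hap => hap i (i + 2 ^ v) (by omega) hjk (by omega) heq⟩

lemma family_core (m i v p : ℕ) (hm : 0 < m)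
    (h1 : p * 2 ^ v ≤ i * m) (h2 : (i + 1) * m ≤ (p + 3) * 2 ^ v)
    (hp : ∀ u, u < 3 → S (p + u + m) = S (p + u)) :
    block m i = block m (i + 2 ^ v) := by
  have hP : 0 < (2:ℕ) ^ v := Nat.pow_pos (by norm_num)
  rw [block_eq_iff]
  intro t ht
  have hjm : (i + 2 ^ v) * m + t = (i * m + t) + 2 ^ v * m := by ring
  rw [hjm]
  symm
  rw [pow_half_iff]
  have hy1 : p ≤ (i * m + t) / 2 ^ v :=
    (Nat.le_div_iff_mul_le hP).2 (by omega)
  have hy2 : (i * m + t) / 2 ^ v ≤ p + 2 := by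
    have him : i * m + t < (p + 3) * 2 ^ v := by
      have : i * m + t < (i + 1) * m := by rw [add_one_mul]; omega
      omega
    have := (Nat.div_lt_iff_lt_mul hP).2 him
    omega
  rw [show (i * m + t) / 2 ^ v = p + ((i * m + t) / 2 ^ v - p) by omega]
  exact hp _ (by omega)

lemma familyA (v : ℕ) (hv : 2 ≤ v) :
    block (2 ^ (v + 1) - 1) 2 = block (2 ^ (v + 1) - 1) (2 + 2 ^ v) := by
  have h2 : (2:ℕ) ^ (v + 1) = 2 * 2 ^ v := by rw [pow_succ]; ring
  have hP : 4 ≤ (2:ℕ) ^ v := by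
    calc (4:ℕ) = 2 ^ 2 := rfl
      _ ≤ 2 ^ v := Nat.pow_le_pow_right (by norm_num) hv
  apply family_core _ _ _ 3 (by omega) (by omega) (by omega)
  intro u hu
  have hc : u + 2 < 2 ^ (v + 1) := by omega
  have he : 3 + u + (2 ^ (v + 1) - 1) = 2 ^ (v + 1) + (u + 2) := by omega
  rw [he, S_pow_add _ _ hc]
  interval_cases u
  · rw [S_two, S_three]
  · rw [S_three, S_four]
  · rw [S_four, S_five]

lemma familyBeven (v w : ℕ) (hv : 6 ≤ v) (hve : v % 2 = 0) (hw : 2 ^ v = 3 * w + 1) :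
    block (3 * 2 ^ v - 3) w = block (3 * 2 ^ v - 3) (w + 2 ^ v) := by
  have hP : 64 ≤ (2:ℕ) ^ v := by
    calc (64:ℕ) = 2 ^ 6 := rfl
      _ ≤ 2 ^ v := Nat.pow_le_pow_right (by norm_num) hv
  have hw21 : 21 ≤ w := by omega
  have h4 : (2:ℕ) ^ (v + 2) = 4 * 2 ^ v := by rw [pow_succ, pow_succ]; ring
  have hm : 3 * 2 ^ v - 3 = 9 * w := by omega
  rw [hm]
  apply family_core _ _ _ (3 * w - 1) (by omega) ?_ ?_ ?_
  · -- (3w-1) * 2^v ≤ w * 9w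
    rw [hw]
    obtain ⟨c, rfl⟩ : ∃ c, w = 21 + c := ⟨w - 21, by omega⟩
    rw [show 3 * (21 + c) - 1 = 62 + 3 * c by omega]
    nlinarith [sq_nonneg c]
  · -- (w+1) * 9w ≤ (3w+2) * 2^v
    rw [hw]
    obtain ⟨c, rfl⟩ : ∃ c, w = 21 + c := ⟨w - 21, by omega⟩
    rw [show 3 * (21 + c) - 1 + 3 = 65 + 3 * c by omega]
    nlinarith [sq_nonneg c]
  · intro u hu
    have key : ∀ u', u' < 3 → S (2 ^ v - 2 + u' + (3 * 2 ^ v - 3)) = S (2 ^ v - 2 + u') := by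
      intro u' hu'
      interval_cases u'
      · rw [show 2 ^ v - 2 + 0 + (3 * 2 ^ v - 3) = 2 ^ (v + 2) - 5 by omega,
          show 2 ^ v - 2 + 0 = 2 ^ v - 2 by omega, S_sub5 _ (by omega), S_sub2 _ (by omega)]
        omega
      · rw [show 2 ^ v - 2 + 1 + (3 * 2 ^ v - 3) = 2 ^ (v + 2) - 4 by omega,
          show 2 ^ v - 2 + 1 = 2 ^ v - 1 by omega, S_sub4 _ (by omega), S_sub1]
        omega
      · rw [show 2 ^ v - 2 + 2 + (3 * 2 ^ v - 3) = 2 ^ (v + 2) - 3 by omega,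
          show 2 ^ v - 2 + 2 = 2 ^ v by omega, S_sub3 _ (by omega), S_pow]
        omega
    have := key u hu
    rw [show 2 ^ v - 2 + u = 3 * w - 1 + u by omega,
      show 3 * 2 ^ v - 3 = 9 * w by omega] at this
    exact this

lemma familyBodd (v w : ℕ) (hv : 5 ≤ v) (hvo : v % 2 = 1) (hw : 2 ^ v = 3 * w + 2) :
    block (3 * 2 ^ v - 9) w = block (3 * 2 ^ v - 9) (w + 2 ^ v) := by
  have hP : 32 ≤ (2:ℕ) ^ v := by
    calc (32:ℕ) = 2 ^ 5 := rfl
      _ ≤ 2 ^ v := Nat.pow_le_pow_right (by norm_num) hv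
  have hw10 : 10 ≤ w := by omega
  have h4 : (2:ℕ) ^ (v + 2) = 4 * 2 ^ v := by rw [pow_succ, pow_succ]; ring
  have hm : 3 * 2 ^ v - 9 = 9 * w - 3 := by omega
  rw [hm]
  apply family_core _ _ _ (3 * w - 3) (by omega) ?_ ?_ ?_
  · rw [hw]
    obtain ⟨c, rfl⟩ : ∃ c, w = 10 + c := ⟨w - 10, by omega⟩
    rw [show 3 * (10 + c) - 3 = 27 + 3 * c by omega,
      show 9 * (10 + c) - 3 = 87 + 9 * c by omega]
    nlinarith [sq_nonneg c]
  · rw [hw]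
    obtain ⟨c, rfl⟩ : ∃ c, w = 10 + c := ⟨w - 10, by omega⟩
    rw [show 3 * (10 + c) - 3 + 3 = 30 + 3 * c by omega,
      show 9 * (10 + c) - 3 = 87 + 9 * c by omega]
    nlinarith [sq_nonneg c]
  · intro u hu
    have key : ∀ u', u' < 3 → S (2 ^ v - 5 + u' + (3 * 2 ^ v - 9)) = S (2 ^ v - 5 + u') := by
      intro u' hu'
      interval_cases u'
      · rw [show 2 ^ v - 5 + 0 + (3 * 2 ^ v - 9) = 2 ^ (v + 2) - 14 by omega,
          show 2 ^ v - 5 + 0 = 2 ^ v - 5 by omega, S_sub14 _ (by omega), S_sub5 _ (by omega)]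
        omega
      · rw [show 2 ^ v - 5 + 1 + (3 * 2 ^ v - 9) = 2 ^ (v + 2) - 13 by omega,
          show 2 ^ v - 5 + 1 = 2 ^ v - 4 by omega, S_sub13 _ (by omega), S_sub4 _ (by omega)]
        omega
      · rw [show 2 ^ v - 5 + 2 + (3 * 2 ^ v - 9) = 2 ^ (v + 2) - 12 by omega,
          show 2 ^ v - 5 + 2 = 2 ^ v - 3 by omega, S_sub12 _ (by omega), S_sub3 _ (by omega)]
        omega
    have := key u hu
    rw [show 2 ^ v - 5 + u = 3 * w - 3 + u by omega,
      show 3 * 2 ^ v - 9 = 9 * w - 3 by omega] at this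
    exact this

lemma Gam_lb (k : ℕ) (hk : 35 ≤ k) : 3 * k ≤ 2 * Gam k + 24 := by
  have h1 : 2 ^ Nat.log 2 (k - 3) ≤ k - 3 := Nat.pow_log_le_self 2 (by omega)
  have h2 : k - 3 < 2 ^ (Nat.log 2 (k - 3) + 1) := Nat.lt_pow_succ_log_self (by norm_num) _
  set v := Nat.log 2 (k - 3) with hv
  have hv5 : 5 ≤ v := by
    rcases Nat.lt_or_ge v 5 with h | h
    · exfalso
      have h3 : (2:ℕ) ^ (v + 1) ≤ 2 ^ 5 := Nat.pow_le_pow_right (by norm_num) (by omega)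
      have h4 : (2:ℕ) ^ 5 = 32 := by norm_num
      omega
    · exact h
  have hP : 32 ≤ 2 ^ v := by
    calc (32:ℕ) = 2 ^ 5 := by norm_num
      _ ≤ 2 ^ v := Nat.pow_le_pow_right (by norm_num) hv5
  have h2' : (2:ℕ) ^ (v + 1) = 2 * 2 ^ v := by rw [pow_succ]; ring
  have h2'' : (2:ℕ) ^ v = 2 * 2 ^ (v - 1) := by rw [← pow_succ']; congr 1; omega
  have hA : 2 ^ (v + 1) - 1 ≤ Gam k :=
    Gam_ge (Nat.odd_iff.2 (by omega)) (by omega : 2 + 2 ^ v < k) (familyA v (by omega))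
  rcases Nat.mod_two_eq_zero_or_one v with hve | hvo
  · obtain ⟨w, hw⟩ : ∃ w, 2 ^ v = 3 * w + 1 :=
      ⟨(2 ^ v - 1) / 3, by have := pow2_mod3 v; omega⟩
    by_cases hkB : w + 2 ^ v + 1 ≤ k
    · have hB : 3 * 2 ^ v - 3 ≤ Gam k :=
        Gam_ge (Nat.odd_iff.2 (by omega)) (by omega) (familyBeven v w (by omega) hve hw)
      omega
    · omega
  · obtain ⟨w, hw⟩ : ∃ w, 2 ^ v = 3 * w + 2 :=
      ⟨(2 ^ v - 2) / 3, by have := pow2_mod3 v; omega⟩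
    by_cases hkB : w + 2 ^ v + 1 ≤ k
    · have hB : 3 * 2 ^ v - 9 ≤ Gam k :=
        Gam_ge (Nat.odd_iff.2 (by omega)) (by omega) (familyBodd v w (by omega) hvo hw)
      omega
    · omega

theorem stmt13 :
    Filter.liminf (fun k : ℕ => (Gam k : ℝ) / k) Filter.atTop = 3 / 2 := by
  have hge0 : ∀ k : ℕ, (0:ℝ) ≤ (Gam k : ℝ) / k := fun k => by positivity
  have hbdd : IsBoundedUnder (· ≥ ·) atTop (fun k : ℕ => (Gam k : ℝ) / k) :=
    ⟨0, Filter.eventually_map.2 (Eventually.of_forall hge0)⟩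
  have hble : IsBoundedUnder (· ≤ ·) atTop (fun k : ℕ => (Gam k : ℝ) / k) := by
    refine ⟨3, Filter.eventually_map.2 (Eventually.of_forall fun k => ?_)⟩
    rcases Nat.eq_zero_or_pos k with h | h
    · subst h; simp
    · rw [div_le_iff₀ (by positivity)]
      have := Gam_le_mul k
      calc (Gam k : ℝ) ≤ 3 * k := by exact_mod_cast this
        _ = 3 * k := rfl
  have hle : liminf (fun k : ℕ => (Gam k : ℝ) / k) atTop ≤ 3 / 2 := by
    apply liminf_le_of_frequently_le ?_ hbdd
    rw [frequently_atTop]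
    intro N
    refine ⟨2 ^ (N + 1), ?_, ?_⟩
    · calc N ≤ 2 ^ N := Nat.le_of_lt (Nat.lt_two_pow_self)
        _ ≤ 2 ^ (N + 1) := Nat.pow_le_pow_right (by norm_num) (by omega)
    · have h := Gam_pow_le (N + 1) (by omega)
      simp only [Nat.add_sub_cancel] at h
      rw [div_le_iff₀ (by positivity)]
      calc (Gam (2 ^ (N + 1)) : ℝ) ≤ 3 * 2 ^ N := by exact_mod_cast h
        _ = 3 / 2 * (2 ^ (N + 1) : ℕ) := by push_cast; ring
  have hge : 3 / 2 ≤ liminf (fun k : ℕ => (Gam k : ℝ) / k) atTop := by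
    by_contra hlt
    push_neg at hlt
    set L := liminf (fun k : ℕ => (Gam k : ℝ) / k) atTop with hL
    set c : ℝ := (L + 3 / 2) / 2 with hc
    have hcL : L < c := by rw [hc]; linarith
    have hc32 : c < 3 / 2 := by rw [hc]; linarith
    have hev : ∀ᶠ k : ℕ in atTop, c ≤ (Gam k : ℝ) / k := by
      obtain ⟨K, hK⟩ := exists_nat_ge (12 / (3 / 2 - c))
      filter_upwards [eventually_ge_atTop 35, eventually_ge_atTop (K + 1)] with k hk1 hk2
      have hlb := Gam_lb k hk1
      have hkpos : (0:ℝ) < k := by positivity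
      rw [le_div_iff₀ hkpos]
      have hcast : (3:ℝ) * k ≤ 2 * Gam k + 24 := by exact_mod_cast hlb
      have h12 : 12 / (3 / 2 - c) < (k:ℝ) := by
        calc 12 / (3 / 2 - c) ≤ K := hK
          _ < k := by exact_mod_cast hk2
      have h12' : 12 < (3 / 2 - c) * k := by
        rw [div_lt_iff₀ (by linarith)] at h12
        linarith [h12]
      nlinarith [hcast, h12']
    have : c ≤ L := le_liminf_of_le (hble.isCoboundedUnder_ge) hev
    linarith
  linarith
end

section
/- Let m be an odd positive integer, ℓ = ⌈log₂ m⌉, and let K(m) be the least k such that the length-km prefix of the Thue-Morse word is not a k-anti-power. If K(m) > 2^ℓ + 1, then t_{m+1} t_{m+2} = 11 and t_{2m+1} t_{2m+2} = 10. -/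
open Filter

/-- Bit-sum parity of `n` (the Thue-Morse sequence indexed from 0). -/
def sp (n : ℕ) : ℕ := (Nat.digits 2 n).sum % 2

lemma sp_lt (n : ℕ) : sp n < 2 := Nat.mod_lt _ (by norm_num)

lemma tm_eq (n : ℕ) : tm (n + 1) = sp n := rfl

lemma sp_bit (a r : ℕ) (h : r < 2) : sp (2 * a + r) = (sp a + r) % 2 := by
  rcases Nat.eq_zero_or_pos a with ha | ha
  · subst ha; interval_cases r <;> simp [sp]
  · have h2 : 0 < 2 * a + r := by omega
    unfold sp
    rw [Nat.digits_def' (by norm_num : 1 < 2) h2]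
    have hmm : (2 * a + r) % 2 = r := by omega
    have hd : (2 * a + r) / 2 = a := by omega
    rw [hmm, hd, List.sum_cons]
    omega

lemma sp_zero : sp 0 = 0 := by simp [sp]

lemma sp_one : sp 1 = 1 := by
  have := sp_bit 0 1 (by norm_num)
  simpa [sp_zero] using this

lemma sp_pow (n a b : ℕ) (hb : b < 2 ^ n) : sp (2 ^ n * a + b) = (sp a + sp b) % 2 := by
  induction n generalizing b with
  | zero =>
      interval_cases b
      have := sp_lt a
      simp only [pow_zero, one_mul, Nat.add_zero, sp_zero]
      omega
  | succ n ih =>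
      have hb2 : b / 2 < 2 ^ n := by
        have e : 2 ^ (n + 1) = 2 * 2 ^ n := by ring
        omega
      have e1 : 2 ^ (n + 1) * a + b = 2 * (2 ^ n * a) + b := by ring
      have e2 : ∀ X : ℕ, 2 * X + b = 2 * (X + b / 2) + b % 2 := fun X => by omega
      rw [e1, e2 (2 ^ n * a), sp_bit _ _ (by omega), ih _ hb2]
      have hb' : sp b = (sp (b / 2) + b % 2) % 2 := by
        conv_lhs => rw [show b = 2 * (b / 2) + b % 2 by omega]
        exact sp_bit _ _ (by omega)
      have := sp_lt a; have := sp_lt (b / 2); have := sp_lt b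
      omega

lemma block_eq_of (m i j : ℕ) (h : ∀ r < m, sp (i * m + r) = sp (j * m + r)) :
    block m i = block m j := by
  unfold block seg
  have len : ∀ x : ℕ, (x + 1) * m + 1 - (x * m + 1) = m := by
    intro x
    rw [add_mul, one_mul]
    generalize x * m = y
    omega
  rw [len i, len j]
  apply List.map_congr_left
  intro r hr
  rw [show i * m + 1 + r = (i * m + r) + 1 by ring,
    show j * m + 1 + r = (j * m + r) + 1 by ring, tm_eq, tm_eq]
  exact h r (List.mem_range.mp hr)

lemma ell_eq_clog (m : ℕ) : ell m = Nat.clog 2 m := by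
  unfold ell
  rw [show (2:ℝ) = ((2:ℕ):ℝ) by norm_num, Real.ceil_logb_natCast (Nat.cast_nonneg m),
    Int.clog_natCast]
  exact Int.toNat_natCast _

theorem stmt15 (m : ℕ) (hm : Odd m) (hmpos : 0 < m)
    (h : 2 ^ ell m + 1 < Kap m) :
    tm (m + 1) = 1 ∧ tm (m + 2) = 1 ∧ tm (2 * m + 1) = 1 ∧ tm (2 * m + 2) = 0 := by
  rw [show m + 2 = (m + 1) + 1 by ring, show 2 * m + 2 = (2 * m + 1) + 1 by ring,
    show 2 * m + 1 = (2 * m) + 1 by ring, tm_eq, tm_eq, tm_eq, tm_eq]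
  have h2m : sp (2 * m) = sp m := by
    have e := sp_pow 1 m 0 (by norm_num)
    rw [show 2 ^ 1 * m + 0 = 2 * m by ring] at e
    have := sp_lt m
    rw [sp_zero] at e
    omega
  have h2m1 : sp (2 * m + 1) = (sp m + 1) % 2 := by
    have e := sp_pow 1 m 1 (by norm_num)
    rw [show 2 ^ 1 * m + 1 = 2 * m + 1 by ring, sp_one] at e
    exact e
  have key : sp m = 1 ∧ sp (m + 1) = 1 := by
    rcases eq_or_lt_of_le (show 1 ≤ m from hmpos) with h1 | h1
    · -- m = 1
      rw [← h1]
      constructor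
      · exact sp_one
      · have e := sp_bit 1 0 (by norm_num)
        rw [sp_one] at e
        simpa using e
    · -- m ≥ 2
      have hm2 : 2 ≤ m := h1
      have hap : IsAntiPowerPrefix m (2 ^ ell m + 1) := by
        by_contra hc
        have hle : Kap m ≤ 2 ^ ell m + 1 := Nat.sInf_le hc
        omega
      have hcl : ell m = Nat.clog 2 m := ell_eq_clog m
      have hL : m ≤ 2 ^ ell m := by rw [hcl]; exact Nat.le_pow_clog (by norm_num) m
      have hl1 : 1 ≤ ell m := by rw [hcl]; exact Nat.clog_pos (by norm_num) hm2
      have hH : 2 ^ (ell m - 1) < m := by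
        rw [hcl]; exact Nat.pow_pred_clog_lt_self (by norm_num) hm2
      have hHL : 2 * 2 ^ (ell m - 1) = 2 ^ ell m := by
        rw [← pow_succ']
        congr 1
        omega
      have hsm : sp m = 1 := by
        by_contra hc
        have hsm0 : sp m = 0 := by have := sp_lt m; omega
        have hbe : block m 0 = block m (2 ^ ell m) := by
          apply block_eq_of
          intro r hr
          have e := sp_pow (ell m) m r (by omega)
          rw [hsm0] at e
          have := sp_lt r
          rw [zero_mul, zero_add, e]
          omega
        exact hap 0 (2 ^ ell m) (by omega) (by omega) (by positivity) hbe
      refine ⟨hsm, ?_⟩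
      by_contra hc
      have hsm1 : sp (m + 1) = 0 := by have := sp_lt (m + 1); omega
      have hbe : block m (2 ^ (ell m - 1)) = block m (2 ^ ell m) := by
        apply block_eq_of
        intro r hr
        have hrhs := sp_pow (ell m) m r (by omega)
        rcases lt_or_ge r (2 ^ (ell m - 1)) with hrH | hrH
        · have e := sp_pow (ell m - 1) m r hrH
          rw [hrhs, e]
        · -- H ≤ r < m
          have hsplit : 2 ^ (ell m - 1) * m + r = 2 ^ (ell m - 1) * (m + 1) + (r - 2 ^ (ell m - 1)) := by
            have e2 : ∀ X Y : ℕ, X ≤ r → Y + r = Y + X + (r - X) := fun X Y hX => by omega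
            calc 2 ^ (ell m - 1) * m + r
                = 2 ^ (ell m - 1) * m + 2 ^ (ell m - 1) + (r - 2 ^ (ell m - 1)) :=
                  e2 _ _ hrH
              _ = 2 ^ (ell m - 1) * (m + 1) + (r - 2 ^ (ell m - 1)) := by ring
          have hrH2 : r - 2 ^ (ell m - 1) < 2 ^ (ell m - 1) := by omega
          have e := sp_pow (ell m - 1) (m + 1) (r - 2 ^ (ell m - 1)) hrH2
          rw [hsplit, e, hsm1]
          have er : sp r = (1 + sp (r - 2 ^ (ell m - 1))) % 2 := by
            have e3 := sp_pow (ell m - 1) 1 (r - 2 ^ (ell m - 1)) hrH2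
            rw [mul_one, sp_one] at e3
            rw [show 2 ^ (ell m - 1) + (r - 2 ^ (ell m - 1)) = r by omega] at e3
            exact e3
          rw [hrhs, er, hsm]
          have := sp_lt (r - 2 ^ (ell m - 1))
          omega
      refine hap (2 ^ (ell m - 1)) (2 ^ ell m) (by omega) (by omega) ?_ hbe
      have : 2 ^ (ell m - 1) < 2 ^ ell m := by omega
      omega
  obtain ⟨k1, k2⟩ := key
  refine ⟨k1, k2, ?_, ?_⟩
  · rw [h2m, k1]
  · rw [h2m1, k1]
end

section
/- Let m ≥ 3 be odd with ℓ = ⌈log₂ m⌉, and suppose there is a positive integer j with t_j t_{j+1} = t_{m+j} t_{m+j+1}. Then K(m) < (1 + (j+1)/m)·2^ℓ, where K(m) is the least k such that the length-km prefix of the Thue-Morse word is not a k-anti-power. -/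
open Filter

lemma Ssplit (p a : ℕ) : ∀ b, b < 2 ^ p →
    (Nat.digits 2 (b + a * 2 ^ p)).sum = (Nat.digits 2 b).sum + (Nat.digits 2 a).sum := by
  induction p with
  | zero =>
    intro b hb
    interval_cases b
    simp
  | succ p ih =>
    intro b hb
    rcases Nat.eq_zero_or_pos (b + a * 2 ^ (p + 1)) with h0 | hpos
    · have hb0 : b = 0 := by omega
      have ha0 : a = 0 := by
        have : 0 < 2 ^ (p + 1) := Nat.pow_pos (by norm_num)
        nlinarith
      simp [hb0, ha0]
    · have hre : a * 2 ^ (p + 1) = a * 2 ^ p * 2 := by ring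
      have e1 : (b + a * 2 ^ (p + 1)) % 2 = b % 2 := by
        rw [hre, Nat.add_mul_mod_self_right]
      have e2 : (b + a * 2 ^ (p + 1)) / 2 = b / 2 + a * 2 ^ p := by
        rw [hre, Nat.add_mul_div_right _ _ (by norm_num : (0:ℕ) < 2)]
      rw [Nat.digits_def' (by norm_num : 1 < 2) hpos, List.sum_cons, e1, e2,
        ih (b / 2) (by rw [pow_succ] at hb; omega)]
      rcases Nat.eq_zero_or_pos b with hb0 | hbp
      · simp [hb0]
      · rw [Nat.digits_def' (by norm_num : 1 < 2) hbp, List.sum_cons]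
        ring

lemma le_pow_ell (m : ℕ) (hm : 1 ≤ m) : m ≤ 2 ^ ell m := by
  have hm' : (1 : ℝ) ≤ (m : ℝ) := by exact_mod_cast hm
  have hlog : (0 : ℝ) ≤ Real.logb 2 (m : ℝ) :=
    Real.logb_nonneg (by norm_num) hm'
  have hceil : (0 : ℤ) ≤ ⌈Real.logb 2 (m : ℝ)⌉ := by
    exact_mod_cast Int.ceil_nonneg (by exact_mod_cast hlog)
  have key : (m : ℝ) ≤ 2 ^ ell m := by
    have h1 : (m : ℝ) = (2 : ℝ) ^ (Real.logb 2 (m : ℝ)) :=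
      (Real.rpow_logb (by norm_num) (by norm_num) (by linarith)).symm
    have h2 : (2 : ℝ) ^ (Real.logb 2 (m : ℝ)) ≤ (2 : ℝ) ^ ((ell m : ℕ) : ℝ) := by
      apply Real.rpow_le_rpow_of_exponent_le (by norm_num)
      have : Real.logb 2 (m : ℝ) ≤ (⌈Real.logb 2 (m : ℝ)⌉ : ℝ) := Int.le_ceil _
      have h3 : ((⌈Real.logb 2 (m : ℝ)⌉ : ℤ) : ℝ) = ((ell m : ℕ) : ℝ) := by
        unfold ell
        exact_mod_cast congrArg (fun z : ℤ => (z : ℝ)) (Int.toNat_of_nonneg hceil).symm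
      linarith [h3 ▸ this]
    rw [Real.rpow_natCast] at h2
    linarith [h1, h2]
  exact_mod_cast key

theorem stmt16 (m : ℕ) (hm : Odd m) (hm3 : 3 ≤ m) (j : ℕ) (hj : 0 < j)
    (h : tm j = tm (m + j) ∧ tm (j + 1) = tm (m + j + 1)) :
    (Kap m : ℝ) < (1 + (j + 1 : ℝ) / m) * 2 ^ ell m := by
  obtain ⟨h1, h2⟩ := h
  unfold tm at h1 h2
  set L := 2 ^ ell m with hLdef
  have hL : m ≤ L := le_pow_ell m (by omega)
  have hLpos : 0 < L := Nat.pow_pos (by norm_num)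
  set A := L * (j - 1) with hAdef
  set i := (A + m - 1) / m with hidef
  have hdiv := Nat.div_add_mod (A + m - 1) m
  have hmod : (A + m - 1) % m < m := Nat.mod_lt _ (by omega)
  rw [← hidef] at hdiv
  have hi1 : A ≤ m * i := by omega
  have hi2 : m * i ≤ A + m - 1 := by omega
  -- blocks i and i + L are equal
  have hblock : block m i = block m (i + L) := by
    unfold block seg
    have elen : ∀ n : ℕ, (n + 1) * m + 1 - (n * m + 1) = m := by
      intro n
      have : (n + 1) * m = n * m + m := by ring
      omega
    rw [elen, elen]
    apply List.map_congr_left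
    intro c hc
    rw [List.mem_range] at hc
    unfold tm
    set x := i * m + c with hxdef
    set q := x / L with hqdef
    set r := x % L with hrdef
    have hqr := Nat.div_add_mod x L
    rw [← hqdef, ← hrdef] at hqr
    have hr : r < L := Nat.mod_lt _ hLpos
    have hxlo : A ≤ x := by
      have : i * m = m * i := by ring
      omega
    have hxhi : x < A + 2 * L := by
      have : i * m = m * i := by ring
      omega
    have hqlo : j - 1 ≤ q := by
      rw [hqdef, Nat.le_div_iff_mul_le hLpos]
      have : (j - 1) * L = L * (j - 1) := by ring
      omega
    have hqhi : q < j + 1 := by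
      rw [hqdef, Nat.div_lt_iff_lt_mul hLpos]
      have e : (j + 1) * L = (j - 1) * L + 2 * L := by
        have : j + 1 = (j - 1) + 2 := by omega
        rw [this]; ring
      have : (j - 1) * L = L * (j - 1) := by ring
      omega
    have hq : q = j - 1 ∨ q = j := by omega
    have hpar : (Nat.digits 2 q).sum % 2 = (Nat.digits 2 (q + m)).sum % 2 := by
      rcases hq with hqe | hqe <;> rw [hqe]
      · rw [show j - 1 + m = m + j - 1 by omega]
        exact h1
      · rw [show j + m = m + j + 1 - 1 by omega]
        rw [show (j : ℕ) = j + 1 - 1 from by omega] -- careful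
        exact h2
    have e1 : i * m + 1 + c - 1 = r + q * L := by
      have : q * L = L * q := by ring
      omega
    have e2 : (i + L) * m + 1 + c - 1 = r + (q + m) * L := by
      have a1 : (i + L) * m = i * m + L * m := by ring
      have a2 : (q + m) * L = q * L + m * L := by ring
      have a3 : q * L = L * q := by ring
      have a4 : L * m = m * L := by ring
      omega
    rw [e1, e2, Ssplit (ell m) q r (by rw [← hLdef]; exact hr),
      Ssplit (ell m) (q + m) r (by rw [← hLdef]; exact hr)]
    omega
  -- hence not an anti-power prefix with k = i + L + 1 blocks
  have hnot : ¬ IsAntiPowerPrefix m (i + L + 1) := by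
    intro hap
    exact hap i (i + L) (by omega) (by omega) (by omega) hblock
  have hKle : Kap m ≤ i + L + 1 := Nat.sInf_le hnot
  -- numeric bound : m * (i + 1) < (j + 1) * L
  have hnum : m * (i + 1) < (j + 1) * L := by
    have e : (j + 1) * L = (j - 1) * L + 2 * L := by
      have : j + 1 = (j - 1) + 2 := by omega
      rw [this]; ring
    have : (j - 1) * L = L * (j - 1) := by ring
    have hmul : m * (i + 1) = m * i + m := by ring
    omega
  -- conclude over the reals
  have hmR : (0 : ℝ) < (m : ℝ) := by positivity
  have hcast : ((Kap m : ℕ) : ℝ) ≤ ((i + L + 1 : ℕ) : ℝ) := by exact_mod_cast hKle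
  have key : ((i + L + 1 : ℕ) : ℝ) < (1 + (j + 1 : ℝ) / m) * 2 ^ ell m := by
    rw [show (1 + (j + 1 : ℝ) / m) = ((m : ℝ) + (j + 1)) / m from by field_simp]
    rw [div_mul_eq_mul_div, lt_div_iff₀ hmR]
    have hgoal : (m : ℝ) * (i + 1) < ((j : ℝ) + 1) * L := by exact_mod_cast hnum
    have hLR : ((L : ℕ) : ℝ) = (2 : ℝ) ^ ell m := by
      rw [hLdef]; push_cast; ring
    push_cast
    rw [← hLR]
    push_cast
    nlinarith
  linarith
end
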